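/- arXiv:2502.09094 — 6 statements merged into one kernel-verified Lean document; each statement's English description precedes it below -/
import Mathlib

section
/- Let b be a rational, non-inner function in the closed unit ball of H^∞ with ‖b‖_∞ = 1, Pythagorean mate a with zeros ζ₁,…,ζ_l on 𝕋 of multiplicities m₁,…,m_l. If a sequence Λ = (λ_n) in 𝔻 is universal interpolating for H(b), then Σ_{n∈ℕ} (1−|λ_n|²)/|ζ_j−λ_n|^{2m_j} < ∞ for every 1 ≤ j ≤ l. -/
open Complex MeasureTheory Metric Set Finset Filter ProbabilityTheory Polynomial
open scoped ENNReal NNReal Topology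

noncomputable section

/-- Membership in the Hardy space `H²` of the unit disk: `f` is holomorphic on `𝔻` and the
mean-square integrals over circles of radius `r < 1` are uniformly bounded. -/
def MemHardy2 (f : ℂ → ℂ) : Prop :=
  DifferentiableOn ℂ f (ball (0 : ℂ) 1) ∧
  ∃ C : ℝ, ∀ r : ℝ, 0 < r → r < 1 →
    (1 / (2 * Real.pi)) * ∫ t in (0 : ℝ)..(2 * Real.pi),
      ‖f ((r : ℂ) * Complex.exp ((t : ℂ) * Complex.I))‖ ^ 2 ≤ C

/-- The squared `H²` norm of `f`, as the supremum of the circle means. -/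
def h2NormSq (f : ℂ → ℂ) : ℝ :=
  sSup {y : ℝ | ∃ r : ℝ, 0 < r ∧ r < 1 ∧
    y = (1 / (2 * Real.pi)) * ∫ t in (0 : ℝ)..(2 * Real.pi),
      ‖f ((r : ℂ) * Complex.exp ((t : ℂ) * Complex.I))‖ ^ 2}

/-- Membership in the de Branges-Rovnyak space `H(b)`, where `b` is rational and non-extreme
with Pythagorean mate `a` whose zeros on the circle are `ζ j` with multiplicities `m j`:
`f = ∏ (z - ζ j)^(m j) · g + p` on `𝔻` with `g ∈ H²` and `p` a polynomial of degree `< ∑ m j`. -/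
def MemHb {l : ℕ} (ζ : Fin l → ℂ) (m : Fin l → ℕ) (f : ℂ → ℂ) : Prop :=
  ∃ (g : ℂ → ℂ) (p : Polynomial ℂ), MemHardy2 g ∧ p.degree < ((∑ j, m j : ℕ) : ℕ) ∧
    ∀ z ∈ ball (0 : ℂ) 1, f z = (∏ j, (z - ζ j) ^ m j) * g z + p.eval z

/-- The Carleson condition: the pseudohyperbolic products `∏_{k ≠ n} ρ(Λ n, Λ k)` are
uniformly bounded below (formulated over all finite subsets not containing `n`). -/
def CarlesonCond (Λ : ℕ → ℂ) : Prop :=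
  ∃ δ : ℝ, 0 < δ ∧ ∀ n : ℕ, ∀ F : Finset ℕ, n ∉ F →
    δ ≤ ∏ k ∈ F, ‖(Λ n - Λ k) / (1 - (starRingEnd ℂ) (Λ k) * Λ n)‖

/-- `Λ` is universal interpolating for `H(b)`: the restriction map
`f ↦ (f(Λ n)/‖k^b_{Λ n}‖)` is bounded from `H(b)` into `ℓ²` and onto `ℓ²`.  Here
`‖k^b_λ‖² = (1-|b(λ)|²)/(1-|λ|²)`, and the `H(b)` norm of `f = ∏(z-ζ_j)^{m_j} g + p` is
`(‖g‖² + ‖p‖²)^{1/2}`. -/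
def UnivInterp {l : ℕ} (ζ : Fin l → ℂ) (m : Fin l → ℕ) (b : ℂ → ℂ) (Λ : ℕ → ℂ) : Prop :=
  (∃ C : ℝ, ∀ (g : ℂ → ℂ) (p : Polynomial ℂ), MemHardy2 g → p.degree < ((∑ j, m j : ℕ) : ℕ) →
    ∀ F : Finset ℕ,
      ∑ n ∈ F, ‖(∏ j, (Λ n - ζ j) ^ m j) * g (Λ n) + p.eval (Λ n)‖ ^ 2 *
          ((1 - ‖Λ n‖ ^ 2) / (1 - ‖b (Λ n)‖ ^ 2)) ≤
        C * (h2NormSq g + h2NormSq fun z => p.eval z)) ∧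
  ∀ w : ℕ → ℂ, Summable (fun n => ‖w n‖ ^ 2) →
    ∃ f : ℂ → ℂ, MemHb ζ m f ∧
      ∀ n, f (Λ n) * (Real.sqrt ((1 - ‖Λ n‖ ^ 2) / (1 - ‖b (Λ n)‖ ^ 2)) : ℂ) = w n

/-- `Λ` is multiplier interpolating for `H(b)`: every bounded sequence can be interpolated
by a multiplier of `H(b)`. -/
def MultInterp {l : ℕ} (ζ : Fin l → ℂ) (m : Fin l → ℕ) (Λ : ℕ → ℂ) : Prop :=
  ∀ v : ℕ → ℂ, (∃ C : ℝ, ∀ n, ‖v n‖ ≤ C) →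
    ∃ φ : ℂ → ℂ, (∀ f : ℂ → ℂ, MemHb ζ m f → MemHb ζ m fun z => φ z * f z) ∧
      ∀ n, φ (Λ n) = v n


section AuxLemmas
open Finset Metric

lemma aux_npsp (n : ℕ) (z w : ℂ) (hz : ‖z‖ ≤ 1) (hw : ‖w‖ ≤ 1) :
    ‖z ^ n - w ^ n‖ ≤ n * ‖z - w‖ := by
  induction n with
  | zero => simp
  | succ n ih =>
    have h : z ^ (n+1) - w ^ (n+1) = z ^ n * (z - w) + (z ^ n - w ^ n) * w := by ring
    calc ‖z ^ (n+1) - w ^ (n+1)‖ ≤ ‖z ^ n * (z - w)‖ + ‖(z ^ n - w ^ n) * w‖ := by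
          rw [h]; exact norm_add_le _ _
      _ ≤ 1 * ‖z - w‖ + (n * ‖z - w‖) * 1 := by
          rw [norm_mul, norm_mul]
          gcongr
          · calc ‖z ^ n‖ = ‖z‖ ^ n := norm_pow z n
              _ ≤ 1 := pow_le_one₀ (norm_nonneg z) hz
      _ = ((n : ℝ) + 1) * ‖z - w‖ := by ring
      _ = ((n + 1 : ℕ) : ℝ) * ‖z - w‖ := by push_cast; ring

lemma aux_poly_lip (P : Polynomial ℂ) :
    ∃ L : ℝ, 0 ≤ L ∧ ∀ z w : ℂ, ‖z‖ ≤ 1 → ‖w‖ ≤ 1 →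
      ‖P.eval z - P.eval w‖ ≤ L * ‖z - w‖ := by
  refine ⟨∑ i ∈ Finset.range (P.natDegree + 1), ‖P.coeff i‖ * i,
    Finset.sum_nonneg fun i _ => by positivity, fun z w hz hw => ?_⟩
  rw [Polynomial.eval_eq_sum_range, Polynomial.eval_eq_sum_range, ← Finset.sum_sub_distrib]
  calc ‖∑ i ∈ Finset.range (P.natDegree+1), (P.coeff i * z ^ i - P.coeff i * w ^ i)‖
      ≤ ∑ i ∈ Finset.range (P.natDegree+1), ‖P.coeff i‖ * (i * ‖z - w‖) := by
        refine (norm_sum_le _ _).trans (Finset.sum_le_sum fun i _ => ?_)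
        rw [← mul_sub, norm_mul]
        exact mul_le_mul_of_nonneg_left (aux_npsp i z w hz hw) (norm_nonneg _)
    _ = (∑ i ∈ Finset.range (P.natDegree+1), ‖P.coeff i‖ * i) * ‖z - w‖ := by
        rw [Finset.sum_mul]; exact Finset.sum_congr rfl fun i _ => by ring

lemma aux_pow_add_le (B ε : ℝ) (hB0 : 0 ≤ B) (hB2 : B ≤ 2) (hε0 : 0 ≤ ε) (hε1 : ε ≤ 1)
    (k : ℕ) : (B + ε) ^ k ≤ B ^ k + ε * (k * 3 ^ k) := by
  induction k with
  | zero => simp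
  | succ k ih =>
    have h3 : (0:ℝ) < 3 ^ k := by positivity
    have hBk : B ^ k ≤ 3 ^ k := pow_le_pow_left₀ hB0 (by linarith) k
    have hk0 : (0:ℝ) ≤ (k:ℝ) := Nat.cast_nonneg k
    have hne : (0:ℝ) ≤ B + ε := by linarith
    calc (B+ε)^(k+1) = (B+ε) * (B+ε)^k := by ring
      _ ≤ (B+ε) * (B^k + ε*(k*3^k)) := mul_le_mul_of_nonneg_left ih hne
      _ ≤ B^(k+1) + ε * ((k+1) * 3^(k+1)) := by
          push_cast
          rw [pow_succ B, pow_succ (3:ℝ)]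
          have hek3 : (0:ℝ) ≤ ε * (k * 3^k) := by positivity
          have e1 : B * (ε * (k * 3^k)) ≤ 2 * (ε * (k * 3^k)) :=
            mul_le_mul_of_nonneg_right hB2 hek3
          have e2 : ε * B^k ≤ ε * 3^k := mul_le_mul_of_nonneg_left hBk hε0
          have e3 : ε * (ε * (k * 3^k)) ≤ 1 * (ε * (k * 3^k)) :=
            mul_le_mul_of_nonneg_right hε1 hek3
          nlinarith [mul_nonneg hε0 h3.le]
      _ = B^(k+1) + ε * (((k+1 : ℕ) : ℝ) * 3^(k+1)) := by push_cast; ring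


lemma aux_prod_perturb {ι : Type*} [DecidableEq ι] (A B : ι → ℝ) (ε c S : ℝ)
    (hS : 0 ≤ S) (hε0 : 0 ≤ ε) (hε1 : ε ≤ 1) (hc : 0 ≤ c)
    (hB0 : ∀ i, 0 ≤ B i) (hBA : ∀ i, B i ≤ A i + c * ε)
    (hA0 : ∀ i, 0 ≤ A i) (hAS : ∀ i, A i ≤ S) :
    ∀ s : Finset ι, ∏ i ∈ s, B i ≤ ∏ i ∈ s, A i + ε * (s.card * c * (S + c + 1) ^ s.card) := by
  intro s
  induction s using Finset.induction_on with
  | empty => simp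
  | @insert a s ha ih =>
    rw [Finset.prod_insert ha, Finset.prod_insert ha, Finset.card_insert_of_notMem ha]
    set k := s.card with hk
    set T := S + c + 1 with hT
    have hT1 : (1:ℝ) ≤ T := by simp [hT]; linarith
    have hTk : (0:ℝ) < T ^ k := by positivity
    have hP0 : (0:ℝ) ≤ ∏ i ∈ s, A i := Finset.prod_nonneg fun i _ => hA0 i
    have hPb0 : (0:ℝ) ≤ ∏ i ∈ s, B i := Finset.prod_nonneg fun i _ => hB0 i
    have hPT : ∏ i ∈ s, A i ≤ T ^ k := by
      calc ∏ i ∈ s, A i ≤ ∏ i ∈ s, T :=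
            Finset.prod_le_prod (fun i _ => hA0 i) (fun i _ => by have := hAS i; simp [hT]; linarith)
        _ = T ^ k := by rw [Finset.prod_const]
    have hBa : (0:ℝ) ≤ A a + c * ε := by nlinarith [hA0 a]
    have step1 : B a * ∏ i ∈ s, B i ≤ (A a + c * ε) * (∏ i ∈ s, A i + ε * (k * c * T ^ k)) :=
      mul_le_mul (hBA a) ih hPb0 hBa
    refine step1.trans ?_
    push_cast
    have hkc : (0:ℝ) ≤ (k:ℝ) * c := by positivity
    have e1 : A a * (ε * ((k:ℝ) * c * T ^ k)) ≤ S * (ε * ((k:ℝ) * c * T ^ k)) :=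
      mul_le_mul_of_nonneg_right (hAS a) (by positivity)
    have e2 : c * ε * (∏ i ∈ s, A i) ≤ c * ε * T ^ k :=
      mul_le_mul_of_nonneg_left hPT (by positivity)
    have e3 : c * ε * (ε * ((k:ℝ) * c * T ^ k)) ≤ ε * (c * ((k:ℝ) * c * T ^ k)) := by
      have hX : (0:ℝ) ≤ (k:ℝ) * c * T ^ k := by positivity
      have hee : ε * ε ≤ ε := by nlinarith
      nlinarith [mul_le_mul_of_nonneg_left hee (mul_nonneg hc hX)]
    have e4 : T ^ k ≤ T ^ (k+1) := by
      calc T ^ k = 1 * T ^ k := (one_mul _).symm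
        _ ≤ T * T ^ k := mul_le_mul_of_nonneg_right hT1 hTk.le
        _ = T ^ (k+1) := by ring
    have hcoef : S * ((k:ℝ) * c * T ^ k) + c * T ^ k + c * ((k:ℝ) * c * T ^ k)
        ≤ ((k:ℝ)+1) * c * T ^ (k+1) := by
      rw [pow_succ, hT]
      have hcT : (0:ℝ) ≤ c * T ^ k := mul_nonneg hc hTk.le
      have hk0' : (0:ℝ) ≤ (k:ℝ) := Nat.cast_nonneg k
      nlinarith [mul_nonneg (mul_nonneg hc hTk.le) hk0',
        mul_nonneg (mul_nonneg hc hTk.le) hS,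
        mul_nonneg (mul_nonneg hc hTk.le) hc]
    have e5 : ε * (S * ((k:ℝ) * c * T ^ k) + c * T ^ k + c * ((k:ℝ) * c * T ^ k))
        ≤ ε * (((k:ℝ)+1) * c * T ^ (k+1)) := mul_le_mul_of_nonneg_left hcoef hε0
    nlinarith [e1, e2, e3, e5]

lemma aux_poly_bound (P : Polynomial ℂ) :
    ∃ M : ℝ, 0 ≤ M ∧ ∀ z : ℂ, ‖z‖ ≤ 1 → ‖P.eval z‖ ≤ M := by
  obtain ⟨M, hM⟩ := (isCompact_closedBall (0:ℂ) 1).exists_bound_of_continuousOn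
    (P.continuous_aeval.continuousOn)
  refine ⟨M, le_trans (norm_nonneg _) (hM 0 (by simp)), fun z hz => ?_⟩
  exact hM z (by simpa [mem_closedBall_zero_iff] using hz)

lemma aux_poly_min (Q : Polynomial ℂ) (hQ : ∀ z : ℂ, ‖z‖ ≤ 1 → Q.eval z ≠ 0) :
    ∃ q : ℝ, 0 < q ∧ ∀ z : ℂ, ‖z‖ ≤ 1 → q ≤ ‖Q.eval z‖ := by
  obtain ⟨z₀, hz₀, hmin⟩ := (isCompact_closedBall (0:ℂ) 1).exists_isMinOn
    ⟨0, by simp⟩ ((Q.continuous_aeval.norm).continuousOn)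
  refine ⟨‖Q.eval z₀‖, ?_, fun z hz => ?_⟩
  · exact norm_pos_iff.2 (hQ z₀ (by simpa [mem_closedBall_zero_iff] using hz₀))
  · exact hmin (by simpa [mem_closedBall_zero_iff] using hz)

set_option maxHeartbeats 2000000 in
lemma keyB (b a : ℂ → ℂ) {l : ℕ} (ζ : Fin l → ℂ) (m : Fin l → ℕ)
    (hζ : ∀ j, ‖ζ j‖ = 1)
    (hb_rat : ∃ P Q : Polynomial ℂ, (∀ z : ℂ, ‖z‖ ≤ 1 → Q.eval z ≠ 0) ∧
      ∀ z : ℂ, ‖z‖ ≤ 1 → b z = P.eval z / Q.eval z)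
    (hb_le : ∀ z : ℂ, ‖z‖ ≤ 1 → ‖b z‖ ≤ 1)
    (ha_form : ∃ P Q : Polynomial ℂ, (∀ z : ℂ, ‖z‖ ≤ 1 → P.eval z ≠ 0 ∧ Q.eval z ≠ 0) ∧
      ∀ z : ℂ, ‖z‖ ≤ 1 → a z = (∏ j, (z - ζ j) ^ m j) * P.eval z / Q.eval z)
    (hab : ∀ z : ℂ, ‖z‖ = 1 → ‖a z‖ ^ 2 + ‖b z‖ ^ 2 = 1) :
    ∃ K : ℝ, 1 ≤ K ∧ ∀ z : ℂ, ‖z‖ ≤ 1 →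
      1 - ‖b z‖ ^ 2 ≤ K * ((1 - ‖z‖ ^ 2) + ∏ i, ‖z - ζ i‖ ^ (2 * m i)) := by
  obtain ⟨P, Q, hQ0, hbPQ⟩ := hb_rat
  obtain ⟨Pa, Qa, hPQa0, haPQ⟩ := ha_form
  obtain ⟨MP, hMP0, hMP⟩ := aux_poly_bound P
  obtain ⟨MQ, hMQ0, hMQ⟩ := aux_poly_bound Q
  obtain ⟨MPa, hMPa0, hMPa⟩ := aux_poly_bound Pa
  obtain ⟨q, hq, hqQ⟩ := aux_poly_min Q hQ0
  obtain ⟨qa, hqa, hqQa⟩ := aux_poly_min Qa (fun z hz => (hPQa0 z hz).2)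
  obtain ⟨LP, hLP0, hLP⟩ := aux_poly_lip P
  obtain ⟨LQ, hLQ0, hLQ⟩ := aux_poly_lip Q
  set Lb : ℝ := (LP * MQ + MP * LQ) / q ^ 2 with hLbdef
  have hLb0 : 0 ≤ Lb := by positivity
  -- Lipschitz bound for b on the closed disk
  have hblip : ∀ z w : ℂ, ‖z‖ ≤ 1 → ‖w‖ ≤ 1 → ‖b z - b w‖ ≤ Lb * ‖z - w‖ := by
    intro z w hz hw
    rw [hbPQ z hz, hbPQ w hw, div_sub_div _ _ (hQ0 z hz) (hQ0 w hw), norm_div, norm_mul]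
    have hnum : P.eval z * Q.eval w - Q.eval z * P.eval w
        = (P.eval z - P.eval w) * Q.eval w + P.eval w * (Q.eval w - Q.eval z) := by ring
    have h1 : ‖P.eval z * Q.eval w - Q.eval z * P.eval w‖ ≤ (LP * MQ + MP * LQ) * ‖z - w‖ := by
      rw [hnum]
      calc ‖(P.eval z - P.eval w) * Q.eval w + P.eval w * (Q.eval w - Q.eval z)‖
          ≤ ‖P.eval z - P.eval w‖ * ‖Q.eval w‖ + ‖P.eval w‖ * ‖Q.eval w - Q.eval z‖ := by
            rw [← norm_mul, ← norm_mul]; exact norm_add_le _ _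
        _ ≤ (LP * ‖z - w‖) * MQ + MP * (LQ * ‖w - z‖) :=
            add_le_add
              (mul_le_mul (hLP z w hz hw) (hMQ w hw) (norm_nonneg _) (by positivity))
              (mul_le_mul (hMP w hw) (hLQ w z hw hz) (norm_nonneg _) hMP0)
        _ = (LP * MQ + MP * LQ) * ‖z - w‖ := by rw [norm_sub_rev w z]; ring
    have h2 : q ^ 2 ≤ ‖Q.eval z‖ * ‖Q.eval w‖ := by
      have := hqQ z hz; have := hqQ w hw
      nlinarith [norm_nonneg (Q.eval z)]
    calc ‖P.eval z * Q.eval w - Q.eval z * P.eval w‖ / (‖Q.eval z‖ * ‖Q.eval w‖)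
        ≤ ((LP * MQ + MP * LQ) * ‖z - w‖) / q ^ 2 :=
          div_le_div₀ (by positivity) h1 (by positivity) h2
      _ = Lb * ‖z - w‖ := by rw [hLbdef, div_mul_eq_mul_div]
  -- Lipschitz bound for |b|²
  have hsqlip : ∀ z w : ℂ, ‖z‖ ≤ 1 → ‖w‖ ≤ 1 →
      ‖b w‖ ^ 2 - ‖b z‖ ^ 2 ≤ 2 * Lb * ‖z - w‖ := by
    intro z w hz hw
    have h1 : ‖b w‖ - ‖b z‖ ≤ ‖b w - b z‖ := norm_sub_norm_le _ _
    have h2 : ‖b w - b z‖ ≤ Lb * ‖z - w‖ := by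
      rw [norm_sub_rev z w] at *; exact hblip w z hw hz
    nlinarith [hb_le z hz, hb_le w hw, norm_nonneg (b z), norm_nonneg (b w),
      norm_nonneg (b w - b z)]
  -- boundary estimate
  set C0 : ℝ := (MPa / qa) ^ 2 with hC0def
  have hC00 : 0 ≤ C0 := sq_nonneg _
  have hbdry : ∀ z : ℂ, ‖z‖ = 1 →
      1 - ‖b z‖ ^ 2 ≤ C0 * ∏ i, ‖z - ζ i‖ ^ (2 * m i) := by
    intro z hz
    have hz1 : ‖z‖ ≤ 1 := hz.le
    have h1 : 1 - ‖b z‖ ^ 2 = ‖a z‖ ^ 2 := by have := hab z hz; linarith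
    rw [h1, haPQ z hz1, norm_div, norm_mul, norm_prod]
    simp only [norm_pow]
    have hre : (∏ i, ‖z - ζ i‖ ^ m i) ^ 2 = ∏ i, ‖z - ζ i‖ ^ (2 * m i) := by
      rw [← Finset.prod_pow]
      exact Finset.prod_congr rfl fun i _ => by rw [← pow_mul, mul_comm]
    rw [mul_div_assoc, mul_pow, hre]
    have h2 : (‖Pa.eval z‖ / ‖Qa.eval z‖) ^ 2 ≤ C0 := by
      have h3 : ‖Pa.eval z‖ / ‖Qa.eval z‖ ≤ MPa / qa :=
        div_le_div₀ hMPa0 (hMPa z hz1) hqa (hqQa z hz1)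
      exact pow_le_pow_left₀ (by positivity) h3 2
    calc (∏ i, ‖z - ζ i‖ ^ (2 * m i)) * (‖Pa.eval z‖ / ‖Qa.eval z‖) ^ 2
        ≤ (∏ i, ‖z - ζ i‖ ^ (2 * m i)) * C0 :=
          mul_le_mul_of_nonneg_left h2 (Finset.prod_nonneg fun i _ => by positivity)
      _ = C0 * ∏ i, ‖z - ζ i‖ ^ (2 * m i) := mul_comm _ _
  -- constants
  set N : ℕ := ∑ i, m i with hNdef
  set c : ℝ := 2 * N * 3 ^ (2 * N) with hcdef
  have hc0 : 0 ≤ c := by positivity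
  set S : ℝ := 2 ^ (2 * N) with hSdef
  have hS0 : 0 ≤ S := by positivity
  set E : ℝ := l * c * (S + c + 1) ^ l with hEdef
  have hE0 : 0 ≤ E := by positivity
  refine ⟨C0 + C0 * E + 2 * Lb + 1, by nlinarith [mul_nonneg hC00 hE0], fun z hz1 => ?_⟩
  set K : ℝ := C0 + C0 * E + 2 * Lb + 1 with hKdef
  have hK1 : (1:ℝ) ≤ K := by rw [hKdef]; nlinarith [mul_nonneg hC00 hE0]
  have hprodnn : 0 ≤ ∏ i, ‖z - ζ i‖ ^ (2 * m i) :=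
    Finset.prod_nonneg fun i _ => by positivity
  by_cases hz0 : z = 0
  · subst hz0
    simp only [norm_zero]
    nlinarith [sq_nonneg ‖b (0:ℂ)‖, mul_nonneg (le_trans zero_le_one hK1) hprodnn]
  · set r : ℝ := ‖z‖ with hrdef
    have hr0 : 0 < r := norm_pos_iff.2 hz0
    set w : ℂ := (r⁻¹ : ℝ) • z with hwdef
    have hw1 : ‖w‖ = 1 := by
      rw [hwdef, norm_smul, Real.norm_eq_abs, abs_of_pos (inv_pos.2 hr0), ← hrdef,
        inv_mul_cancel₀ hr0.ne']
    have hwz : ‖w - z‖ = 1 - r := by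
      have h1 : w - z = ((r⁻¹ - 1 : ℝ)) • z := by rw [hwdef, sub_smul, one_smul]
      rw [h1, norm_smul, Real.norm_eq_abs, ← hrdef]
      have hinv : 1 ≤ r⁻¹ := one_le_inv_iff₀.2 ⟨hr0, hz1⟩
      have habs : |r⁻¹ - 1| = r⁻¹ - 1 := abs_of_nonneg (by linarith)
      rw [habs]
      field_simp
    set ε : ℝ := 1 - r with hεdef
    have hε0 : 0 ≤ ε := by rw [hεdef]; linarith
    have hε1 : ε ≤ 1 := by rw [hεdef]; linarith
    have hζ2 : ∀ i, ‖z - ζ i‖ ≤ 2 := fun i => by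
      calc ‖z - ζ i‖ ≤ ‖z‖ + ‖ζ i‖ := norm_sub_le _ _
        _ ≤ 2 := by rw [hζ i]; linarith
    have hBA : ∀ i, ‖w - ζ i‖ ^ (2 * m i) ≤ ‖z - ζ i‖ ^ (2 * m i) + c * ε := by
      intro i
      have h2 : ‖w - ζ i‖ ≤ ‖z - ζ i‖ + ε := by
        have h3 : w - ζ i = (z - ζ i) + (w - z) := by ring
        rw [h3]
        exact (norm_add_le _ _).trans (by rw [hwz, hεdef])
      have hmN : m i ≤ N := Finset.single_le_sum (fun i _ => Nat.zero_le _) (mem_univ i)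
      calc ‖w - ζ i‖ ^ (2 * m i) ≤ (‖z - ζ i‖ + ε) ^ (2 * m i) :=
            pow_le_pow_left₀ (norm_nonneg _) h2 _
        _ ≤ ‖z - ζ i‖ ^ (2 * m i) + ε * (((2 * m i : ℕ) : ℝ) * 3 ^ (2 * m i)) :=
            aux_pow_add_le _ _ (norm_nonneg _) (hζ2 i) hε0 hε1 _
        _ ≤ ‖z - ζ i‖ ^ (2 * m i) + c * ε := by
            have h4 : ((2 * m i : ℕ) : ℝ) * 3 ^ (2 * m i) ≤ c := by
              rw [hcdef]
              have h5 : ((2 * m i : ℕ) : ℝ) ≤ 2 * (N : ℝ) := by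
                push_cast
                have : (m i : ℝ) ≤ (N : ℝ) := Nat.cast_le.mpr hmN
                linarith
              have h6 : (3:ℝ) ^ (2 * m i) ≤ 3 ^ (2 * N) :=
                pow_le_pow_right₀ (by norm_num) (by omega)
              calc ((2 * m i : ℕ) : ℝ) * 3 ^ (2 * m i) ≤ (2 * (N:ℝ)) * 3 ^ (2 * m i) :=
                    mul_le_mul_of_nonneg_right h5 (by positivity)
                _ ≤ (2 * (N:ℝ)) * 3 ^ (2 * N) :=
                    mul_le_mul_of_nonneg_left h6 (by positivity)
            have h8 : ε * (((2 * m i : ℕ) : ℝ) * 3 ^ (2 * m i)) ≤ c * ε := by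
              rw [mul_comm c ε]
              exact mul_le_mul_of_nonneg_left h4 hε0
            linarith
    have hA0 : ∀ i, (0:ℝ) ≤ ‖z - ζ i‖ ^ (2 * m i) := fun i => by positivity
    have hB0 : ∀ i, (0:ℝ) ≤ ‖w - ζ i‖ ^ (2 * m i) := fun i => by positivity
    have hAS : ∀ i, ‖z - ζ i‖ ^ (2 * m i) ≤ S := by
      intro i
      have hmN : m i ≤ N := Finset.single_le_sum (fun i _ => Nat.zero_le _) (mem_univ i)
      calc ‖z - ζ i‖ ^ (2 * m i) ≤ 2 ^ (2 * m i) :=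
            pow_le_pow_left₀ (norm_nonneg _) (hζ2 i) _
        _ ≤ S := by rw [hSdef]; exact pow_le_pow_right₀ (by norm_num) (by omega)
    have hPB := aux_prod_perturb (fun i => ‖z - ζ i‖ ^ (2 * m i))
      (fun i => ‖w - ζ i‖ ^ (2 * m i)) ε c S hS0 hε0 hε1 hc0 hB0 hBA hA0 hAS Finset.univ
    rw [Finset.card_univ, Fintype.card_fin] at hPB
    have hb1 : 1 - ‖b w‖ ^ 2 ≤ C0 * ∏ i, ‖w - ζ i‖ ^ (2 * m i) := hbdry w hw1
    have hb2 : ‖b w‖ ^ 2 - ‖b z‖ ^ 2 ≤ 2 * Lb * ε := by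
      have h9 := hsqlip z w hz1 hw1.le
      rw [norm_sub_rev z w, hwz] at h9
      exact h9
    have hεle : ε ≤ 1 - ‖z‖ ^ 2 := by
      rw [hεdef, ← hrdef]
      nlinarith
    have hCB : C0 * (∏ i, ‖w - ζ i‖ ^ (2 * m i))
        ≤ C0 * ((∏ i, ‖z - ζ i‖ ^ (2 * m i)) + ε * E) := by
      apply mul_le_mul_of_nonneg_left _ hC00
      calc ∏ i, ‖w - ζ i‖ ^ (2 * m i)
          ≤ (∏ i, ‖z - ζ i‖ ^ (2 * m i)) + ε * ((l : ℝ) * c * (S + c + 1) ^ l) := hPB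
        _ = (∏ i, ‖z - ζ i‖ ^ (2 * m i)) + ε * E := by rw [hEdef]
    have hx0 : 0 ≤ 1 - ‖z‖ ^ 2 := by nlinarith [norm_nonneg z]
    nlinarith [mul_nonneg (add_nonneg (mul_nonneg hC00 hE0) (by positivity : (0:ℝ) ≤ 2 * Lb))
        (by linarith : (0:ℝ) ≤ (1 - ‖z‖ ^ 2) - ε),
      mul_nonneg hprodnn (by positivity : (0:ℝ) ≤ C0 * E + 2 * Lb + 1),
      mul_nonneg hε0 hE0, mul_nonneg hC00 (mul_nonneg hε0 hE0)]

end AuxLemmas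

set_option maxHeartbeats 2000000 in
/-- **Lemma.** Let `b` be a rational, non-inner function in the closed unit ball of `H^∞` with
`‖b‖_∞ = 1`, with Pythagorean mate `a` whose zeros on `𝕋` are `ζ 1, …, ζ l` with multiplicities
`m 1, …, m l`.  If a sequence `Λ` in `𝔻` is universal interpolating for `H(b)`, then
`∑_n (1-|Λ n|²)/|ζ j - Λ n|^{2 m j} < ∞` for every `1 ≤ j ≤ l`. -/
theorem statement3
    (b a : ℂ → ℂ) (l : ℕ) (ζ : Fin l → ℂ) (m : Fin l → ℕ)
    (hζ : ∀ j, ‖ζ j‖ = 1) (hζinj : Function.Injective ζ) (hm : ∀ j, 1 ≤ m j)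
    (hb_rat : ∃ P Q : Polynomial ℂ, (∀ z : ℂ, ‖z‖ ≤ 1 → Q.eval z ≠ 0) ∧
      ∀ z : ℂ, ‖z‖ ≤ 1 → b z = P.eval z / Q.eval z)
    (hb_le : ∀ z : ℂ, ‖z‖ ≤ 1 → ‖b z‖ ≤ 1)
    (hb_norm : ∃ z : ℂ, ‖z‖ = 1 ∧ ‖b z‖ = 1)
    (hb_noninner : ∃ z : ℂ, ‖z‖ = 1 ∧ ‖b z‖ < 1)
    (ha_form : ∃ P Q : Polynomial ℂ, (∀ z : ℂ, ‖z‖ ≤ 1 → P.eval z ≠ 0 ∧ Q.eval z ≠ 0) ∧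
      ∀ z : ℂ, ‖z‖ ≤ 1 → a z = (∏ j, (z - ζ j) ^ m j) * P.eval z / Q.eval z)
    (ha_le : ∀ z : ℂ, ‖z‖ ≤ 1 → ‖a z‖ ≤ 1)
    (ha0 : 0 < (a 0).re ∧ (a 0).im = 0)
    (hab : ∀ z : ℂ, ‖z‖ = 1 → ‖a z‖ ^ 2 + ‖b z‖ ^ 2 = 1)
    (Λ : ℕ → ℂ) (hΛ : ∀ n, ‖Λ n‖ < 1)
    (hinterp : UnivInterp ζ m b Λ) :
    ∀ j, Summable fun n => (1 - ‖Λ n‖ ^ 2) / ‖ζ j - Λ n‖ ^ (2 * m j) := by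
  classical
  intro j
  obtain ⟨hbd, hsurj⟩ := hinterp
  have hx : ∀ n, 0 < 1 - ‖Λ n‖ ^ 2 := fun n => by nlinarith [norm_nonneg (Λ n), hΛ n]
  -- positivity of the weights, from surjectivity
  have hdpos : ∀ n, 0 < (1 - ‖Λ n‖ ^ 2) / (1 - ‖b (Λ n)‖ ^ 2) := by
    intro n
    obtain ⟨f, -, hf⟩ := hsurj (fun k => if k = n then 1 else 0)
      (summable_of_ne_finset_zero (s := {n}) (fun k hk => by
        simp only [Finset.mem_singleton] at hk; simp [hk]))
    have h1 := hf n
    simp only [if_pos rfl] at h1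
    by_contra hle
    push_neg at hle
    rw [Real.sqrt_eq_zero'.mpr hle] at h1
    simp at h1
  have hDpos : ∀ n, 0 < 1 - ‖b (Λ n)‖ ^ 2 := by
    intro n
    rcases lt_trichotomy (1 - ‖b (Λ n)‖ ^ 2) 0 with h | h | h
    · exact absurd (hdpos n) (not_lt.2 (div_neg_of_pos_of_neg (hx n) h).le)
    · have := hdpos n; rw [h, div_zero] at this; exact absurd this (lt_irrefl 0)
    · exact h
  -- summability of the weights, from boundedness applied to the constant function 1
  obtain ⟨C, hC⟩ := hbd
  have hmem0 : MemHardy2 (fun _ => (0 : ℂ)) :=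
    ⟨differentiableOn_const 0, 0, fun r hr hr1 => by simp⟩
  have hN1 : 0 < ∑ i, m i := Finset.sum_pos (fun i _ => hm i) ⟨j, Finset.mem_univ j⟩
  have hdeg : (1 : Polynomial ℂ).degree < (((∑ i, m i : ℕ) : ℕ) : WithBot ℕ) := by
    rw [Polynomial.degree_one]
    exact_mod_cast hN1
  have hsum_d : Summable (fun n => (1 - ‖Λ n‖ ^ 2) / (1 - ‖b (Λ n)‖ ^ 2)) := by
    apply summable_of_sum_le (c := C * (h2NormSq (fun _ => (0:ℂ)) +
        h2NormSq (fun z => Polynomial.eval z (1 : Polynomial ℂ)))) (fun n => (hdpos n).le)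
    intro F
    have h2 := hC (fun _ => 0) 1 hmem0 hdeg F
    calc ∑ n ∈ F, (1 - ‖Λ n‖ ^ 2) / (1 - ‖b (Λ n)‖ ^ 2)
        = ∑ n ∈ F, ‖(∏ i, (Λ n - ζ i) ^ m i) * (fun _ => (0:ℂ)) (Λ n) +
            Polynomial.eval (Λ n) (1 : Polynomial ℂ)‖ ^ 2 *
            ((1 - ‖Λ n‖ ^ 2) / (1 - ‖b (Λ n)‖ ^ 2)) := by
          refine Finset.sum_congr rfl fun n _ => ?_
          simp
      _ ≤ _ := h2
  -- the key pointwise inequality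
  obtain ⟨K, hK1, hKB⟩ := keyB b a ζ m hζ hb_rat hb_le ha_form hab
  set y : ℕ → ℝ := fun n => ∏ i, ‖Λ n - ζ i‖ ^ (2 * m i) with hydef
  have hΛζ : ∀ n i, Λ n - ζ i ≠ 0 := by
    intro n i h
    have heq : Λ n = ζ i := by linear_combination h
    have h2 := hΛ n
    rw [heq, hζ i] at h2
    exact absurd h2 (lt_irrefl 1)
  have hy : ∀ n, 0 < y n := fun n =>
    Finset.prod_pos fun i _ => pow_pos (norm_pos_iff.2 (hΛζ n i)) _
  have hxy : ∀ n, 0 < (1 - ‖Λ n‖ ^ 2) + y n := fun n => add_pos (hx n) (hy n)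
  have hzK : ∀ n, 1 - ‖b (Λ n)‖ ^ 2 ≤ K * ((1 - ‖Λ n‖ ^ 2) + y n) :=
    fun n => hKB (Λ n) (hΛ n).le
  set t : ℕ → ℝ := fun n => (1 - ‖Λ n‖ ^ 2) / ((1 - ‖Λ n‖ ^ 2) + y n) with htdef
  have ht_le : ∀ n, t n ≤ K * ((1 - ‖Λ n‖ ^ 2) / (1 - ‖b (Λ n)‖ ^ 2)) := by
    intro n
    rw [htdef]
    simp only
    rw [← mul_div_assoc, div_le_div_iff₀ (hxy n) (hDpos n)]
    nlinarith [mul_le_mul_of_nonneg_left (hzK n) (hx n).le]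
  have ht0 : ∀ n, 0 ≤ t n := fun n => (div_pos (hx n) (hxy n)).le
  have ht_sum : Summable t := Summable.of_nonneg_of_le ht0 ht_le (hsum_d.mul_left K)
  obtain ⟨n₀, hn₀⟩ := Filter.eventually_atTop.mp
    (ht_sum.tendsto_atTop_zero.eventually_lt_const (by norm_num : (0:ℝ) < 1/2))
  set M : ℝ := ∏ i, (2:ℝ) ^ (2 * m i) with hMdef
  have hM0 : 0 < M := Finset.prod_pos fun i _ => by positivity
  have hΛζ2 : ∀ n i, ‖Λ n - ζ i‖ ≤ 2 := by
    intro n i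
    calc ‖Λ n - ζ i‖ ≤ ‖Λ n‖ + ‖ζ i‖ := norm_sub_le _ _
      _ ≤ 2 := by rw [hζ i]; linarith [(hΛ n).le]
  have hyM : ∀ n, y n ≤ ‖Λ n - ζ j‖ ^ (2 * m j) * M := by
    intro n
    rw [hydef]
    simp only
    rw [← Finset.mul_prod_erase _ _ (Finset.mem_univ j)]
    refine mul_le_mul_of_nonneg_left ?_ (by positivity)
    calc ∏ i ∈ Finset.univ.erase j, ‖Λ n - ζ i‖ ^ (2 * m i)
        ≤ ∏ i ∈ Finset.univ.erase j, (2:ℝ) ^ (2 * m i) :=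
          Finset.prod_le_prod (fun i _ => by positivity)
            (fun i _ => pow_le_pow_left₀ (norm_nonneg _) (hΛζ2 n i) _)
      _ ≤ M := by
          rw [hMdef, ← Finset.mul_prod_erase _ (fun i => (2:ℝ) ^ (2 * m i)) (Finset.mem_univ j)]
          exact le_mul_of_one_le_left
            (Finset.prod_nonneg fun i _ => by positivity)
            (one_le_pow₀ (by norm_num : (1:ℝ) ≤ 2))
  set e : ℕ → ℝ := fun n => (1 - ‖Λ n‖ ^ 2) / ‖Λ n - ζ j‖ ^ (2 * m j) with hedef
  have hA : ∀ n, 0 < ‖Λ n - ζ j‖ ^ (2 * m j) :=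
    fun n => pow_pos (norm_pos_iff.2 (hΛζ n j)) _
  have he_le : ∀ n, n₀ ≤ n → e n ≤ (2 * M) * t n := by
    intro n hn
    have h2 : t n < 1/2 := hn₀ n hn
    have hxley : 1 - ‖Λ n‖ ^ 2 ≤ y n := by
      rw [htdef] at h2
      simp only at h2
      rw [div_lt_iff₀ (hxy n)] at h2
      linarith
    have h3 : e n ≤ M * ((1 - ‖Λ n‖ ^ 2) / y n) := by
      rw [hedef]
      simp only
      rw [← mul_div_assoc, div_le_div_iff₀ (hA n) (hy n)]
      nlinarith [mul_le_mul_of_nonneg_left (hyM n) (hx n).le]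
    have h4 : (1 - ‖Λ n‖ ^ 2) / y n ≤ 2 * t n := by
      rw [htdef]
      simp only
      rw [← mul_div_assoc, div_le_div_iff₀ (hy n) (hxy n)]
      nlinarith [hx n, hy n]
    calc e n ≤ M * ((1 - ‖Λ n‖ ^ 2) / y n) := h3
      _ ≤ M * (2 * t n) := mul_le_mul_of_nonneg_left h4 hM0.le
      _ = (2 * M) * t n := by ring
  have hgoal : Summable e := by
    rw [← summable_nat_add_iff n₀]
    exact Summable.of_nonneg_of_le
      (fun n => div_nonneg (hx _).le (hA _).le)
      (fun n => he_le (n + n₀) (Nat.le_add_left _ _))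
      ((((summable_nat_add_iff n₀).2 ht_sum)).mul_left (2 * M))
  have hfun : (fun n => (1 - ‖Λ n‖ ^ 2) / ‖ζ j - Λ n‖ ^ (2 * m j)) = e := by
    funext n
    rw [hedef]
    simp only
    rw [norm_sub_rev]
  rw [hfun]
  exact hgoal
end
end

section
/- For every integer N ≥ 1 and every λ ∈ 𝔻, the quantity D₁^N(φ_λ) := (1/2π)∫₀^{2π} |(φ_λ(e^{it}) − T_{N−1}(φ_λ,1)(e^{it}))/(e^{it}−1)^N|² dt equals (1−|λ|²)·|λ|^{2(N−1)} / |1−λ|^{2N}. -/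
open Complex Finset

noncomputable section

/-- The Blaschke (Möbius) factor at `λ ∈ 𝔻`. -/
def blaschke (lam : ℂ) : ℂ → ℂ := fun z => (z - lam) / (1 - (starRingEnd ℂ) lam * z)

open Metric

lemma blaschke_hasDerivAt (lam : ℂ) {z : ℂ} (hz : 1 - (starRingEnd ℂ) lam * z ≠ 0) :
    HasDerivAt (blaschke lam)
      ((1 - lam * (starRingEnd ℂ) lam) / (1 - (starRingEnd ℂ) lam * z) ^ 2) z := by
  set c := (starRingEnd ℂ) lam with hc
  have h1 : HasDerivAt (fun w : ℂ => w - lam) 1 z := (hasDerivAt_id z).sub_const lam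
  have h2 : HasDerivAt (fun w : ℂ => 1 - c * w) (-c) z := by
    simpa using ((hasDerivAt_id z).const_mul c).const_sub 1
  have h3 := h1.fun_div h2 hz
  refine h3.congr_deriv ?_
  ring

lemma aux_hasDerivAt (a A : ℂ) (k : ℕ) {z : ℂ} (hz : 1 - a * z ≠ 0) :
    HasDerivAt (fun w : ℂ => A / (1 - a * w) ^ (k + 1))
      (((k : ℂ) + 1) * a * A / (1 - a * z) ^ (k + 2)) z := by
  have h2 : HasDerivAt (fun w : ℂ => 1 - a * w) (-a) z := by
    simpa using ((hasDerivAt_id z).const_mul a).const_sub 1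
  have h3 : HasDerivAt (fun w : ℂ => (1 - a * w) ^ (k + 1))
      (((k : ℂ) + 1) * (1 - a * z) ^ k * (-a)) z := by
    simpa using h2.fun_pow (k + 1)
  have h4 := (hasDerivAt_const z A).fun_div h3 (pow_ne_zero _ hz)
  refine h4.congr_deriv ?_
  rw [div_eq_div_iff (pow_ne_zero _ (pow_ne_zero _ hz)) (pow_ne_zero _ hz)]
  ring

lemma isOpen_ne_aux (c : ℂ) : IsOpen {w : ℂ | 1 - c * w ≠ 0} := by
  have hcont : Continuous fun w : ℂ => 1 - c * w := by continuity
  exact isOpen_compl_singleton.preimage hcont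

lemma iteratedDeriv_blaschke (lam : ℂ) :
    ∀ j, 1 ≤ j → ∀ z : ℂ, 1 - (starRingEnd ℂ) lam * z ≠ 0 →
      iteratedDeriv j (blaschke lam) z
        = (j.factorial : ℂ) * ((starRingEnd ℂ) lam) ^ (j - 1) * (1 - lam * (starRingEnd ℂ) lam)
            / (1 - (starRingEnd ℂ) lam * z) ^ (j + 1) := by
  intro j hj
  induction j, hj using Nat.le_induction with
  | base =>
    intro z hz
    rw [iteratedDeriv_one, (blaschke_hasDerivAt lam hz).deriv]
    simp
  | succ j hj ih =>
    intro z hz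
    set c := (starRingEnd ℂ) lam with hcdef
    obtain ⟨m, rfl⟩ : ∃ m, j = m + 1 := ⟨j - 1, by omega⟩
    have hev : iteratedDeriv (m + 1) (blaschke lam) =ᶠ[nhds z]
        (fun w => ((m + 1).factorial : ℂ) * c ^ m * (1 - lam * c) / (1 - c * w) ^ (m + 2)) := by
      refine Filter.eventuallyEq_of_mem ((isOpen_ne_aux c).mem_nhds hz) (fun w hw => ?_)
      simpa using ih w hw
    rw [iteratedDeriv_succ, hev.deriv_eq,
      (aux_hasDerivAt c (((m + 1).factorial : ℂ) * c ^ m * (1 - lam * c)) (m + 1) hz).deriv]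
    have hfac : ((m + 2).factorial : ℂ) = ((m + 2 : ℕ) : ℂ) * ((m + 1).factorial : ℂ) := by
      rw [show m + 2 = (m + 1) + 1 from rfl, Nat.factorial_succ]; push_cast; ring
    simp only [show m + 1 + 1 - 1 = m + 1 from by omega, show m + 1 + 1 = m + 2 from rfl, hfac]
    push_cast
    ring

lemma remainder_blaschke (lam : ℂ) (hc1 : 1 - (starRingEnd ℂ) lam ≠ 0) :
    ∀ N, 1 ≤ N → ∀ z : ℂ, 1 - (starRingEnd ℂ) lam * z ≠ 0 →
      blaschke lam z - ∑ j ∈ range N, iteratedDeriv j (blaschke lam) 1 * (z - 1) ^ j / (j.factorial : ℂ)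
        = (1 - lam * (starRingEnd ℂ) lam) * ((starRingEnd ℂ) lam) ^ (N - 1) * (z - 1) ^ N
            / ((1 - (starRingEnd ℂ) lam) ^ N * (1 - (starRingEnd ℂ) lam * z)) := by
  intro N hN
  set c := (starRingEnd ℂ) lam with hcdef
  have hc1' : 1 - c * 1 ≠ 0 := by rwa [mul_one]
  induction N, hN using Nat.le_induction with
  | base =>
    intro z hz
    simp only [range_one, sum_singleton, iteratedDeriv_zero, pow_zero, Nat.factorial_zero,
      Nat.cast_one, mul_one, div_one, pow_one]
    show blaschke lam z - blaschke lam 1 = _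
    simp only [blaschke, mul_one]
    rw [← hcdef]
    have h1 : 1 - c ≠ 0 := hc1
    rw [div_sub_div _ _ hz h1, Nat.sub_self, pow_zero, div_eq_div_iff (mul_ne_zero hz h1) (mul_ne_zero h1 hz)]
    ring
  | succ N hN ih =>
    intro z hz
    rw [sum_range_succ, iteratedDeriv_blaschke lam N hN 1 hc1',
      show blaschke lam z - (∑ j ∈ range N, iteratedDeriv j (blaschke lam) 1 * (z - 1) ^ j / (j.factorial : ℂ)
        + (N.factorial : ℂ) * c ^ (N - 1) * (1 - lam * c) / (1 - c * 1) ^ (N + 1) * (z - 1) ^ N / (N.factorial : ℂ))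
      = (blaschke lam z - ∑ j ∈ range N, iteratedDeriv j (blaschke lam) 1 * (z - 1) ^ j / (j.factorial : ℂ))
        - (N.factorial : ℂ) * c ^ (N - 1) * (1 - lam * c) / (1 - c * 1) ^ (N + 1) * (z - 1) ^ N / (N.factorial : ℂ) from by ring,
      ih z hz]
    obtain ⟨m, rfl⟩ : ∃ m, N = m + 1 := ⟨N - 1, by omega⟩
    have hfac : ((m + 1).factorial : ℂ) ≠ 0 := by exact_mod_cast (m + 1).factorial_ne_zero
    simp only [mul_one, show m + 1 - 1 = m from by omega, show m + 1 + 1 - 1 = m + 1 from by omega]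
    field_simp
    ring

lemma one_sub_mul_ne (a w : ℂ) (h : ‖a * w‖ < 1) : 1 - a * w ≠ 0 := by
  intro h0
  have : a * w = 1 := by linear_combination -h0
  rw [this] at h; simp at h

lemma hpt_aux (a z : ℂ) (ha : ‖a‖ < 1) (hz : ‖z‖ = 1) :
    z * Complex.I * ((z - (starRingEnd ℂ) a)⁻¹ * (1 - a * z)⁻¹)
      = Complex.I * (((1 : ℝ) / ‖1 - a * z‖ ^ 2 : ℝ) : ℂ) := by
  have hz0 : z ≠ 0 := by intro h; rw [h] at hz; simp at hz
  have hz1 : z * (starRingEnd ℂ) z = 1 := by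
    rw [Complex.mul_conj, Complex.normSq_eq_norm_sq, hz]; norm_num
  have hne : 1 - a * z ≠ 0 := one_sub_mul_ne a z (by rw [norm_mul, hz, mul_one]; exact ha)
  have hnorm0 : ‖1 - a * z‖ ^ 2 ≠ 0 := pow_ne_zero 2 (norm_ne_zero_iff.mpr hne)
  have hconj : ((‖1 - a * z‖ ^ 2 : ℝ) : ℂ)
      = (1 - a * z) * (1 - (starRingEnd ℂ) a * (starRingEnd ℂ) z) := by
    have h2 : (‖1 - a * z‖ ^ 2 : ℝ) = Complex.normSq (1 - a * z) := by
      rw [Complex.normSq_eq_norm_sq]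
    have := Complex.mul_conj (1 - a * z)
    rw [map_sub, map_one, map_mul] at this
    rw [h2]; exact this.symm
  have hmain : (1 - a * z) * (z - (starRingEnd ℂ) a) = ((‖1 - a * z‖ ^ 2 : ℝ) : ℂ) * z := by
    rw [hconj]
    linear_combination ((1 - a * z) * (starRingEnd ℂ) a) * hz1
  have hs : ((‖1 - a * z‖ ^ 2 : ℝ) : ℂ) ≠ 0 := by exact_mod_cast hnorm0
  calc z * Complex.I * ((z - (starRingEnd ℂ) a)⁻¹ * (1 - a * z)⁻¹)
      = z * Complex.I * ((1 - a * z) * (z - (starRingEnd ℂ) a))⁻¹ := by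
        rw [mul_inv]; ring
    _ = z * Complex.I * (((‖1 - a * z‖ ^ 2 : ℝ) : ℂ) * z)⁻¹ := by rw [hmain]
    _ = Complex.I * (((1 : ℝ) / ‖1 - a * z‖ ^ 2 : ℝ) : ℂ) := by
        have hcast : (((1 : ℝ) / ‖1 - a * z‖ ^ 2 : ℝ) : ℂ) = ((‖1 - a * z‖ ^ 2 : ℝ) : ℂ)⁻¹ := by
          rw [one_div]; push_cast; ring
        rw [hcast, mul_inv]
        have : z * Complex.I * (((‖1 - a * z‖ ^ 2 : ℝ) : ℂ)⁻¹ * z⁻¹)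
            = Complex.I * ((‖1 - a * z‖ ^ 2 : ℝ) : ℂ)⁻¹ * (z * z⁻¹) := by ring
        rw [this, mul_inv_cancel₀ hz0, mul_one]

lemma integral_inv_norm_sq (a : ℂ) (ha : ‖a‖ < 1) :
    ∫ t in (0:ℝ)..(2 * Real.pi), (1 : ℝ) / ‖1 - a * Complex.exp ((t : ℂ) * Complex.I)‖ ^ 2
      = 2 * Real.pi / (1 - ‖a‖ ^ 2) := by
  have hexp : ∀ t : ℝ, ‖Complex.exp ((t : ℂ) * Complex.I)‖ = 1 := fun t => by
    simpa using Complex.abs_exp_ofReal_mul_I t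
  have hd : DiffContOnCl ℂ (fun z : ℂ => (1 - a * z)⁻¹) (ball 0 1) := by
    refine DifferentiableOn.diffContOnCl ?_
    rw [closure_ball (0:ℂ) one_ne_zero]
    refine DifferentiableOn.inv ?_ ?_
    · exact (differentiable_const (1:ℂ)).differentiableOn.sub
        ((differentiable_id.const_mul a).differentiableOn)
    · intro x hx
      refine one_sub_mul_ne _ _ ?_
      rw [norm_mul]
      calc ‖a‖ * ‖x‖ ≤ ‖a‖ * 1 := by
            refine mul_le_mul_of_nonneg_left ?_ (norm_nonneg a)
            simpa [mem_closedBall, dist_eq_norm] using hx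
        _ < 1 := by rwa [mul_one]
  have hwmem : (starRingEnd ℂ) a ∈ ball (0:ℂ) 1 := by
    rw [mem_ball_zero_iff]; simpa using ha
  have key := hd.circleIntegral_sub_inv_smul hwmem
  rw [circleIntegral] at key
  simp only [deriv_circleMap, circleMap, Complex.ofReal_one, zero_add, one_mul, smul_eq_mul] at key
  rw [show (fun t : ℝ => Complex.exp ((t:ℂ) * Complex.I) * Complex.I *
        ((Complex.exp ((t:ℂ) * Complex.I) - (starRingEnd ℂ) a)⁻¹ *
          (1 - a * Complex.exp ((t:ℂ) * Complex.I))⁻¹))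
      = (fun t : ℝ => Complex.I * (((1:ℝ) / ‖1 - a * Complex.exp ((t:ℂ) * Complex.I)‖ ^ 2 : ℝ) : ℂ)) from
    funext (fun t => hpt_aux a _ ha (hexp t))] at key
  rw [intervalIntegral.integral_const_mul, intervalIntegral.integral_ofReal] at key
  have haa : (1 - a * (starRingEnd ℂ) a) = (((1 - ‖a‖ ^ 2 : ℝ)) : ℂ) := by
    rw [Complex.mul_conj, Complex.normSq_eq_norm_sq]
    push_cast; ring
  rw [haa] at key
  have hI : (Complex.I : ℂ) ≠ 0 := Complex.I_ne_zero
  have h1a : (1 : ℝ) - ‖a‖ ^ 2 ≠ 0 := by nlinarith [norm_nonneg a]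
  have hfin : ((∫ t in (0:ℝ)..(2*Real.pi), (1:ℝ) / ‖1 - a * Complex.exp ((t:ℂ) * Complex.I)‖ ^ 2 : ℝ) : ℂ)
      = ((2 * Real.pi / (1 - ‖a‖ ^ 2) : ℝ) : ℂ) := by
    apply mul_left_cancel₀ hI
    rw [key]
    push_cast
    field_simp
  exact_mod_cast hfin

/-- **Lemma.** For every `N ≥ 1` and `λ ∈ 𝔻`, the local Dirichlet integral of order `N` at `1`
of the Blaschke factor `φ_λ`, namely
`D₁^N(φ_λ) = (1/2π) ∫₀^{2π} |(φ_λ(e^{it}) - T_{N-1}(φ_λ,1)(e^{it}))/(e^{it}-1)^N|² dt`,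
equals `(1-|λ|²)·|λ|^{2(N-1)}/|1-λ|^{2N}`. -/
theorem statement5 (N : ℕ) (hN : 1 ≤ N) (lam : ℂ) (hlam : ‖lam‖ < 1) :
    (1 / (2 * Real.pi)) * ∫ t in (0 : ℝ)..(2 * Real.pi),
        ‖(blaschke lam (Complex.exp ((t : ℂ) * Complex.I)) -
            ∑ j ∈ range N, iteratedDeriv j (blaschke lam) 1 *
              (Complex.exp ((t : ℂ) * Complex.I) - 1) ^ j / (j.factorial : ℂ))
          / (Complex.exp ((t : ℂ) * Complex.I) - 1) ^ N‖ ^ 2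
      = (1 - ‖lam‖ ^ 2) * ‖lam‖ ^ (2 * (N - 1)) / ‖1 - lam‖ ^ (2 * N) := by
  set c := (starRingEnd ℂ) lam with hcdef
  have hcnorm : ‖c‖ = ‖lam‖ := by rw [hcdef]; exact RCLike.norm_conj lam
  have hcl : ‖c‖ < 1 := by rwa [hcnorm]
  have hc1 : 1 - c ≠ 0 := by
    intro h
    have : c = 1 := by linear_combination -h
    rw [this] at hcl; simp at hcl
  have hexp : ∀ t : ℝ, ‖Complex.exp ((t : ℂ) * Complex.I)‖ = 1 := fun t => by
    simpa using Complex.abs_exp_ofReal_mul_I t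
  have hne : ∀ t : ℝ, 1 - c * Complex.exp ((t : ℂ) * Complex.I) ≠ 0 := fun t =>
    one_sub_mul_ne _ _ (by rw [norm_mul, hexp, mul_one]; exact hcl)
  set K : ℂ := (1 - lam * c) * c ^ (N - 1) / (1 - c) ^ N with hKdef
  -- a.e. pointwise identity
  have hcount : ∀ᵐ t : ℝ, Complex.exp ((t : ℂ) * Complex.I) ≠ 1 := by
    have hsub : {t : ℝ | Complex.exp ((t : ℂ) * Complex.I) = 1}
        ⊆ Set.range (fun n : ℤ => (n : ℝ) * (2 * Real.pi)) := by
      intro t ht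
      rw [Set.mem_setOf_eq, Complex.exp_eq_one_iff] at ht
      obtain ⟨n, hn⟩ := ht
      refine ⟨n, ?_⟩
      have h1 : ((n : ℝ) * (2 * Real.pi) : ℂ) = (t : ℂ) := by
        push_cast
        apply mul_right_cancel₀ Complex.I_ne_zero
        linear_combination -hn
      exact_mod_cast h1
    have h0 : MeasureTheory.volume {t : ℝ | Complex.exp ((t : ℂ) * Complex.I) = 1} = 0 :=
      MeasureTheory.measure_mono_null hsub
        ((Set.countable_range (fun n : ℤ => (n : ℝ) * (2 * Real.pi))).measure_zero MeasureTheory.volume)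
    rw [MeasureTheory.ae_iff]
    simpa [not_not] using h0
  have hae : ∀ᵐ t : ℝ, t ∈ Set.uIoc (0:ℝ) (2 * Real.pi) →
      ‖(blaschke lam (Complex.exp ((t : ℂ) * Complex.I)) -
            ∑ j ∈ range N, iteratedDeriv j (blaschke lam) 1 *
              (Complex.exp ((t : ℂ) * Complex.I) - 1) ^ j / (j.factorial : ℂ))
          / (Complex.exp ((t : ℂ) * Complex.I) - 1) ^ N‖ ^ 2
        = ‖K‖ ^ 2 * ((1:ℝ) / ‖1 - c * Complex.exp ((t : ℂ) * Complex.I)‖ ^ 2) := by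
    filter_upwards [hcount] with t ht _
    set z := Complex.exp ((t : ℂ) * Complex.I) with hzdef
    have hz1 : z - 1 ≠ 0 := sub_ne_zero.mpr ht
    have heq : (blaschke lam z -
          ∑ j ∈ range N, iteratedDeriv j (blaschke lam) 1 * (z - 1) ^ j / (j.factorial : ℂ))
          / (z - 1) ^ N = K / (1 - c * z) := by
      rw [remainder_blaschke lam hc1 N hN z (hne t), hKdef, ← hcdef]
      field_simp [pow_ne_zero N hz1, pow_ne_zero N hc1, hne t]
    rw [heq, norm_div, div_pow, div_eq_mul_one_div]
  rw [intervalIntegral.integral_congr_ae hae, intervalIntegral.integral_const_mul,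
    integral_inv_norm_sq c hcl]
  -- final arithmetic
  have hlam1 : ‖1 - lam‖ ≠ 0 := by
    rw [norm_ne_zero_iff]
    intro h
    have : lam = 1 := by linear_combination -h
    rw [this] at hlam; simp at hlam
  have hnormK : ‖K‖ = (1 - ‖lam‖ ^ 2) * ‖lam‖ ^ (N - 1) / ‖1 - lam‖ ^ N := by
    have h1 : 1 - lam * c = (((1 - ‖lam‖ ^ 2 : ℝ)) : ℂ) := by
      rw [hcdef, Complex.mul_conj, Complex.normSq_eq_norm_sq]
      push_cast; ring
    have h2 : ‖1 - c‖ = ‖1 - lam‖ := by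
      rw [hcdef, show 1 - (starRingEnd ℂ) lam = (starRingEnd ℂ) (1 - lam) from by
        rw [map_sub, map_one], RCLike.norm_conj]
    rw [hKdef, norm_div, norm_mul, norm_pow, norm_pow, h1, h2, hcnorm,
      Complex.norm_real, Real.norm_eq_abs, _root_.abs_of_nonneg (by nlinarith [norm_nonneg lam])]
  rw [hnormK]
  have h1a : (1:ℝ) - ‖lam‖ ^ 2 ≠ 0 := by nlinarith [norm_nonneg lam]
  have hpi : Real.pi ≠ 0 := Real.pi_ne_zero
  have hpow : ‖1 - lam‖ ^ N ≠ 0 := pow_ne_zero _ hlam1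
  rw [show 2 * (N - 1) = (N - 1) * 2 from mul_comm _ _, show 2 * N = N * 2 from mul_comm _ _,
    pow_mul, pow_mul, hcnorm]
  set R : ℝ := ‖lam‖ with hR
  set A : ℝ := R ^ (N - 1) with hA
  set B : ℝ := ‖1 - lam‖ ^ N with hB
  field_simp [h1a, hpi, hpow]
end
end

section
/- Let b be a rational, non-inner function in the closed unit ball of H^∞ with ‖b‖_∞ = 1. If Λ = (λ_n)_{n≥1} is a multiplier interpolating sequence for H(b) and λ₀ ∈ 𝔻 does not belong to Λ, then the augmented sequence (λ_n)_{n≥0} is multiplier interpolating for H(b). -/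
open Complex MeasureTheory Metric Set Finset Filter ProbabilityTheory Polynomial
open scoped ENNReal NNReal Topology

noncomputable section

lemma circle_mem (r t : ℝ) (hr0 : 0 < r) (hr1 : r < 1) :
    (r : ℂ) * Complex.exp ((t : ℂ) * Complex.I) ∈ ball (0 : ℂ) 1 := by
  rw [mem_ball_zero_iff]
  simp [Complex.norm_exp, abs_of_pos hr0]
  simpa [Complex.norm_exp, abs_of_pos hr0] using hr1

lemma integrand_cont {f : ℂ → ℂ} (hf : ContinuousOn f (ball (0 : ℂ) 1))
    (r : ℝ) (hr0 : 0 < r) (hr1 : r < 1) :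
    Continuous fun t : ℝ => ‖f ((r : ℂ) * Complex.exp ((t : ℂ) * Complex.I))‖ ^ 2 := by
  have hc : Continuous fun t : ℝ => (r : ℂ) * Complex.exp ((t : ℂ) * Complex.I) := by
    continuity
  exact ((hf.comp_continuous hc (fun t => circle_mem r t hr0 hr1)).norm.pow 2)

lemma memHardy2_of_bounded {f : ℂ → ℂ} {M : ℝ}
    (hd : DifferentiableOn ℂ f (ball (0 : ℂ) 1))
    (hM : ∀ z ∈ ball (0 : ℂ) 1, ‖f z‖ ≤ M) : MemHardy2 f := by
  refine ⟨hd, M ^ 2, fun r hr0 hr1 => ?_⟩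
  have hpi : (0:ℝ) < 2 * Real.pi := by positivity
  have hint : (∫ t in (0:ℝ)..(2*Real.pi),
      ‖f ((r : ℂ) * Complex.exp ((t : ℂ) * Complex.I))‖ ^ 2) ≤
      ∫ _t in (0:ℝ)..(2*Real.pi), M ^ 2 := by
    apply intervalIntegral.integral_mono_on hpi.le
      ((integrand_cont hd.continuousOn r hr0 hr1).intervalIntegrable _ _)
      intervalIntegrable_const
    intro t _
    exact pow_le_pow_left₀ (norm_nonneg _) (hM _ (circle_mem r t hr0 hr1)) 2
  have h2 : (∫ _t in (0:ℝ)..(2*Real.pi), M ^ 2) = 2 * Real.pi * M ^ 2 := by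
    simp [intervalIntegral.integral_const]
  calc (1 / (2 * Real.pi)) * ∫ t in (0:ℝ)..(2*Real.pi),
        ‖f ((r : ℂ) * Complex.exp ((t : ℂ) * Complex.I))‖ ^ 2
      ≤ (1 / (2 * Real.pi)) * (2 * Real.pi * M ^ 2) := by
        apply mul_le_mul_of_nonneg_left _ (by positivity)
        rw [← h2]; exact hint
    _ = M ^ 2 := by field_simp

lemma memHardy2_nonneg_const {g : ℂ → ℂ} {C : ℝ}
    (hg : DifferentiableOn ℂ g (ball (0 : ℂ) 1))
    (hC : ∀ r : ℝ, 0 < r → r < 1 →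
      (1 / (2 * Real.pi)) * ∫ t in (0 : ℝ)..(2 * Real.pi),
        ‖g ((r : ℂ) * Complex.exp ((t : ℂ) * Complex.I))‖ ^ 2 ≤ C) : 0 ≤ C := by
  refine le_trans ?_ (hC (1/2) (by norm_num) (by norm_num))
  have hpi : (0:ℝ) < 2 * Real.pi := by positivity
  apply mul_nonneg (by positivity)
  apply intervalIntegral.integral_nonneg hpi.le
  intro t _; positivity

lemma memHardy2_mul_bounded {φ g : ℂ → ℂ} {M : ℝ}
    (hdφ : DifferentiableOn ℂ φ (ball (0 : ℂ) 1))
    (hM : ∀ z ∈ ball (0 : ℂ) 1, ‖φ z‖ ≤ M)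
    (hg : MemHardy2 g) : MemHardy2 (fun z => φ z * g z) := by
  obtain ⟨hdg, C, hC⟩ := hg
  have hC0 : 0 ≤ C := memHardy2_nonneg_const hdg hC
  refine ⟨hdφ.mul hdg, M ^ 2 * C, fun r hr0 hr1 => ?_⟩
  have hpi : (0:ℝ) < 2 * Real.pi := by positivity
  have hcg := integrand_cont hdg.continuousOn r hr0 hr1
  have hcφg := integrand_cont (hdφ.mul hdg).continuousOn r hr0 hr1
  have hint : (∫ t in (0:ℝ)..(2*Real.pi),
      ‖(fun z => φ z * g z) ((r : ℂ) * Complex.exp ((t : ℂ) * Complex.I))‖ ^ 2) ≤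
      ∫ t in (0:ℝ)..(2*Real.pi),
        M ^ 2 * ‖g ((r : ℂ) * Complex.exp ((t : ℂ) * Complex.I))‖ ^ 2 := by
    apply intervalIntegral.integral_mono_on hpi.le
      (hcφg.intervalIntegrable _ _) ((continuous_const.mul hcg).intervalIntegrable _ _)
    intro t _
    have h1 := hM _ (circle_mem r t hr0 hr1)
    have h2 : (0:ℝ) ≤ ‖φ ((r : ℂ) * Complex.exp ((t : ℂ) * Complex.I))‖ := norm_nonneg _
    have h3 : (0:ℝ) ≤ ‖g ((r : ℂ) * Complex.exp ((t : ℂ) * Complex.I))‖ := norm_nonneg _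
    simp only [Pi.mul_apply, norm_mul, mul_pow]
    have h4 : ‖φ ((r : ℂ) * Complex.exp ((t : ℂ) * Complex.I))‖ ^ 2 ≤ M ^ 2 :=
      pow_le_pow_left₀ h2 h1 2
    nlinarith [sq_nonneg ‖g ((r : ℂ) * Complex.exp ((t : ℂ) * Complex.I))‖]
  calc (1 / (2 * Real.pi)) * ∫ t in (0:ℝ)..(2*Real.pi),
        ‖(fun z => φ z * g z) ((r : ℂ) * Complex.exp ((t : ℂ) * Complex.I))‖ ^ 2
      ≤ (1 / (2 * Real.pi)) * ∫ t in (0:ℝ)..(2*Real.pi),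
          M ^ 2 * ‖g ((r : ℂ) * Complex.exp ((t : ℂ) * Complex.I))‖ ^ 2 :=
        mul_le_mul_of_nonneg_left hint (by positivity)
    _ = M ^ 2 * ((1 / (2 * Real.pi)) * ∫ t in (0:ℝ)..(2*Real.pi),
          ‖g ((r : ℂ) * Complex.exp ((t : ℂ) * Complex.I))‖ ^ 2) := by
        rw [intervalIntegral.integral_const_mul]; ring
    _ ≤ M ^ 2 * C := mul_le_mul_of_nonneg_left (hC r hr0 hr1) (by positivity)

lemma memHardy2_add {f g : ℂ → ℂ} (hf : MemHardy2 f) (hg : MemHardy2 g) :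
    MemHardy2 (fun z => f z + g z) := by
  obtain ⟨hdf, Cf, hCf⟩ := hf
  obtain ⟨hdg, Cg, hCg⟩ := hg
  refine ⟨hdf.add hdg, 2 * Cf + 2 * Cg, fun r hr0 hr1 => ?_⟩
  have hpi : (0:ℝ) < 2 * Real.pi := by positivity
  have hcf := integrand_cont hdf.continuousOn r hr0 hr1
  have hcg := integrand_cont hdg.continuousOn r hr0 hr1
  have hint : (∫ t in (0:ℝ)..(2*Real.pi),
      ‖(fun z => f z + g z) ((r : ℂ) * Complex.exp ((t : ℂ) * Complex.I))‖ ^ 2) ≤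
      ∫ t in (0:ℝ)..(2*Real.pi),
        (2 * ‖f ((r : ℂ) * Complex.exp ((t : ℂ) * Complex.I))‖ ^ 2 +
         2 * ‖g ((r : ℂ) * Complex.exp ((t : ℂ) * Complex.I))‖ ^ 2) := by
    apply intervalIntegral.integral_mono_on hpi.le
      ((integrand_cont (hdf.add hdg).continuousOn r hr0 hr1).intervalIntegrable _ _)
      (((continuous_const.mul hcf).add (continuous_const.mul hcg)).intervalIntegrable _ _)
    intro t _
    have h1 := norm_add_le (f ((r : ℂ) * Complex.exp ((t : ℂ) * Complex.I)))
      (g ((r : ℂ) * Complex.exp ((t : ℂ) * Complex.I)))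
    have h4 := pow_le_pow_left₀ (norm_nonneg _) h1 2
    have h2 : (0:ℝ) ≤ ‖f ((r : ℂ) * Complex.exp ((t : ℂ) * Complex.I))‖ := norm_nonneg _
    have h3 : (0:ℝ) ≤ ‖g ((r : ℂ) * Complex.exp ((t : ℂ) * Complex.I))‖ := norm_nonneg _
    simp only [Pi.mul_apply, Pi.add_apply]
    nlinarith [sq_nonneg (‖f ((r : ℂ) * Complex.exp ((t : ℂ) * Complex.I))‖ -
      ‖g ((r : ℂ) * Complex.exp ((t : ℂ) * Complex.I))‖), h4]
  have hsplit : (∫ t in (0:ℝ)..(2*Real.pi),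
      (2 * ‖f ((r : ℂ) * Complex.exp ((t : ℂ) * Complex.I))‖ ^ 2 +
       2 * ‖g ((r : ℂ) * Complex.exp ((t : ℂ) * Complex.I))‖ ^ 2)) =
      2 * (∫ t in (0:ℝ)..(2*Real.pi), ‖f ((r : ℂ) * Complex.exp ((t : ℂ) * Complex.I))‖ ^ 2) +
      2 * (∫ t in (0:ℝ)..(2*Real.pi), ‖g ((r : ℂ) * Complex.exp ((t : ℂ) * Complex.I))‖ ^ 2) := by
    rw [intervalIntegral.integral_add ((hcf.const_mul 2).intervalIntegrable _ _)
      ((hcg.const_mul 2).intervalIntegrable _ _),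
      intervalIntegral.integral_const_mul, intervalIntegral.integral_const_mul]
  calc (1 / (2 * Real.pi)) * ∫ t in (0:ℝ)..(2*Real.pi),
        ‖(fun z => f z + g z) ((r : ℂ) * Complex.exp ((t : ℂ) * Complex.I))‖ ^ 2
      ≤ (1 / (2 * Real.pi)) *
        (2 * (∫ t in (0:ℝ)..(2*Real.pi), ‖f ((r : ℂ) * Complex.exp ((t : ℂ) * Complex.I))‖ ^ 2) +
         2 * (∫ t in (0:ℝ)..(2*Real.pi), ‖g ((r : ℂ) * Complex.exp ((t : ℂ) * Complex.I))‖ ^ 2)) := by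
        rw [← hsplit]; exact mul_le_mul_of_nonneg_left hint (by positivity)
    _ = 2 * ((1 / (2 * Real.pi)) * ∫ t in (0:ℝ)..(2*Real.pi),
            ‖f ((r : ℂ) * Complex.exp ((t : ℂ) * Complex.I))‖ ^ 2) +
        2 * ((1 / (2 * Real.pi)) * ∫ t in (0:ℝ)..(2*Real.pi),
            ‖g ((r : ℂ) * Complex.exp ((t : ℂ) * Complex.I))‖ ^ 2) := by ring
    _ ≤ 2 * Cf + 2 * Cg := by
        have := hCf r hr0 hr1
        have := hCg r hr0 hr1
        linarith

lemma memHb_congr {l : ℕ} {ζ : Fin l → ℂ} {m : Fin l → ℕ} {f f' : ℂ → ℂ}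
    (hf : MemHb ζ m f) (h : ∀ z ∈ ball (0 : ℂ) 1, f z = f' z) : MemHb ζ m f' := by
  obtain ⟨g, p, hg, hp, heq⟩ := hf
  exact ⟨g, p, hg, hp, fun z hz => (h z hz) ▸ heq z hz⟩

lemma memHb_smul {l : ℕ} {ζ : Fin l → ℂ} {m : Fin l → ℕ} (c : ℂ) {f : ℂ → ℂ}
    (hf : MemHb ζ m f) : MemHb ζ m (fun z => c * f z) := by
  obtain ⟨g, p, hg, hp, heq⟩ := hf
  refine ⟨fun z => c * g z, c • p,
    memHardy2_mul_bounded (differentiableOn_const c) (fun z _ => le_refl ‖c‖) hg,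
    lt_of_le_of_lt (degree_smul_le c p) hp, fun z hz => ?_⟩
  show c * f z = _
  rw [heq z hz]
  simp only [eval_smul, smul_eq_mul]
  ring

lemma degree_prodPoly {l : ℕ} (ζ : Fin l → ℂ) (m : Fin l → ℕ) :
    (∏ j, (X - C (ζ j)) ^ m j : Polynomial ℂ).degree = ((∑ j, m j : ℕ) : WithBot ℕ) := by
  rw [degree_prod]
  simp [degree_pow, degree_X_sub_C, Nat.cast_sum]

lemma monic_prodPoly {l : ℕ} (ζ : Fin l → ℂ) (m : Fin l → ℕ) :
    (∏ j, (X - C (ζ j)) ^ m j : Polynomial ℂ).Monic :=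
  monic_prod_of_monic _ _ fun j _ => (monic_X_sub_C _).pow _

lemma eval_prodPoly {l : ℕ} (ζ : Fin l → ℂ) (m : Fin l → ℕ) (z : ℂ) :
    (∏ j, (X - C (ζ j)) ^ m j : Polynomial ℂ).eval z = ∏ j, (z - ζ j) ^ m j := by
  simp [eval_prod]

lemma poly_bounded (q : Polynomial ℂ) : ∃ M : ℝ, ∀ z ∈ ball (0 : ℂ) 1, ‖q.eval z‖ ≤ M := by
  obtain ⟨M, hM⟩ := (isCompact_closedBall (0:ℂ) 1).exists_bound_of_continuousOn
    (q.continuous_aeval.continuousOn)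
  exact ⟨M, fun z hz => by simpa using hM z (ball_subset_closedBall hz)⟩

lemma memHb_mul_linear {l : ℕ} {ζ : Fin l → ℂ} {m : Fin l → ℕ} (w0 : ℂ) {f : ℂ → ℂ}
    (hf : MemHb ζ m f) : MemHb ζ m (fun z => (z - w0) * f z) := by
  obtain ⟨g, p, hg, hp, heq⟩ := hf
  have hmon := monic_prodPoly ζ m
  obtain ⟨Mq, hMq⟩ := poly_bounded (((X - C w0) * p) /ₘ (∏ j, (X - C (ζ j)) ^ m j))
  have hgq : MemHardy2 (fun z => (z - w0) * g z +
      ((((X - C w0) * p) /ₘ (∏ j, (X - C (ζ j)) ^ m j)).eval z)) := by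
    apply memHardy2_add
    · exact memHardy2_mul_bounded (M := 1 + ‖w0‖)
        ((differentiableOn_id).sub (differentiableOn_const _))
        (fun z hz => by
          have := mem_ball_zero_iff.mp hz
          calc ‖z - w0‖ ≤ ‖z‖ + ‖w0‖ := norm_sub_le _ _
            _ ≤ 1 + ‖w0‖ := by linarith) hg
    · exact memHardy2_of_bounded
        ((((X - C w0) * p) /ₘ (∏ j, (X - C (ζ j)) ^ m j)).differentiable_aeval.differentiableOn)
        hMq
  refine ⟨_, ((X - C w0) * p) %ₘ (∏ j, (X - C (ζ j)) ^ m j), hgq, ?_, fun z hz => ?_⟩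
  · exact lt_of_lt_of_le (degree_modByMonic_lt _ hmon) (le_of_eq (degree_prodPoly ζ m))
  · have key : eval z (((X - C w0) * p) %ₘ (∏ j, (X - C (ζ j)) ^ m j)) +
        (∏ j, (z - ζ j) ^ m j) * eval z (((X - C w0) * p) /ₘ (∏ j, (X - C (ζ j)) ^ m j)) =
        (z - w0) * eval z p := by
      have h0 := congrArg (eval z) (modByMonic_add_div ((X - C w0) * p) (∏ j, (X - C (ζ j)) ^ m j))
      simpa [eval_add, eval_mul, eval_sub, eval_X, eval_C, eval_prod] using h0
    show (z - w0) * f z = _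
    rw [heq z hz]
    linear_combination -key

lemma memHb_add {l : ℕ} {ζ : Fin l → ℂ} {m : Fin l → ℕ} {f f' : ℂ → ℂ}
    (hf : MemHb ζ m f) (hf' : MemHb ζ m f') : MemHb ζ m (fun z => f z + f' z) := by
  obtain ⟨g, p, hg, hp, heq⟩ := hf
  obtain ⟨g', p', hg', hp', heq'⟩ := hf'
  refine ⟨fun z => g z + g' z, p + p', memHardy2_add hg hg',
    lt_of_le_of_lt (degree_add_le p p') (max_lt hp hp'), fun z hz => ?_⟩
  show f z + f' z = _
  rw [heq z hz, heq' z hz]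
  simp only [eval_add]
  ring

lemma memHb_const {l : ℕ} (ζ : Fin l → ℂ) (m : Fin l → ℕ) (c : ℂ) :
    MemHb ζ m (fun _ => c) := by
  by_cases h : (∑ j, m j) = 0
  · refine ⟨fun _ => c, 0, memHardy2_of_bounded (differentiableOn_const c)
      (fun z _ => le_refl ‖c‖), by rw [degree_zero]; exact WithBot.bot_lt_coe _,
      fun z hz => ?_⟩
    have hj : ∀ j, m j = 0 := by
      intro j
      exact (Finset.sum_eq_zero_iff.mp h) j (Finset.mem_univ j)
    simp [hj]
  · refine ⟨fun _ => 0, C c, memHardy2_of_bounded (differentiableOn_const 0)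
      (fun z _ => le_of_eq (norm_zero)), ?_, fun z hz => by simp⟩
    refine lt_of_le_of_lt (degree_C_le) ?_
    exact_mod_cast Nat.pos_of_ne_zero h


set_option maxHeartbeats 1000000 in
lemma sep_lemma {l : ℕ} (ζ : Fin l → ℂ) (m : Fin l → ℕ) (Λ : ℕ → ℂ) (hΛ : ∀ n, ‖Λ n‖ < 1)
    (hinterp : MultInterp ζ m fun n => Λ (n + 1))
    (hnew : ∀ n : ℕ, Λ 0 ≠ Λ (n + 1)) :
    ∃ δ : ℝ, 0 < δ ∧ ∀ n, δ ≤ ‖Λ (n + 1) - Λ 0‖ := by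
  classical
  by_contra hcon
  push_neg at hcon
  obtain ⟨F, hF⟩ := Classical.axiomOfChoice
    (fun dp : {d : ℝ // 0 < d} => hcon dp.1 dp.2)
  have dpos : ∀ q : ℕ, 0 < ‖Λ (q + 1) - Λ 0‖ := fun q =>
    norm_pos_iff.mpr (sub_ne_zero.mpr (Ne.symm (hnew q)))
  let s : ℕ → ℕ := fun k => Nat.rec (F ⟨1, one_pos⟩)
    (fun k prev => F ⟨min ((1:ℝ)/(k+2)) ‖Λ (prev + 1) - Λ 0‖,
      lt_min (by positivity) (dpos prev)⟩) k
  have hd : ∀ k, ‖Λ (s (k+1) + 1) - Λ 0‖ <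
      min ((1:ℝ)/(k+2)) ‖Λ (s k + 1) - Λ 0‖ := fun k => hF _
  have hanti : StrictAnti (fun k => ‖Λ (s k + 1) - Λ 0‖) :=
    strictAnti_nat_of_succ_lt fun k => lt_of_lt_of_le (hd k) (min_le_right _ _)
  have hsinj : Function.Injective s := fun i j h => hanti.injective (by simp only [h])
  have htend : Tendsto (fun k => Λ (s k + 1)) atTop (𝓝 (Λ 0)) := by
    rw [Metric.tendsto_atTop]
    intro ε hε
    obtain ⟨N, hN⟩ := exists_nat_one_div_lt hε
    refine ⟨N + 1, fun k hk => ?_⟩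
    obtain ⟨j, rfl⟩ : ∃ j, k = j + 1 := ⟨k - 1, by omega⟩
    have h1 : ‖Λ (s (j+1) + 1) - Λ 0‖ < 1/(j+2) :=
      lt_of_lt_of_le (hd j) (min_le_left _ _)
    have h2 : (1:ℝ)/(j+2) ≤ 1/(N+1) := by
      apply one_div_le_one_div_of_le (by positivity)
      have hNj : (N:ℝ) ≤ j := by exact_mod_cast (by omega : N ≤ j)
      linarith
    rw [dist_eq_norm]
    calc ‖Λ (s (j+1) + 1) - Λ 0‖ < 1/(j+2) := h1
      _ ≤ 1/(N+1) := h2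
      _ < ε := hN
  set v : ℕ → ℂ := fun n => @ite ℂ (∃ k, s k = n ∧ Even k) (Classical.propDecidable _) 1 0 with hvdef
  obtain ⟨φ, hmul, hval⟩ := hinterp v
    ⟨1, fun n => by rw [hvdef]; dsimp only; split_ifs <;> simp⟩
  have hφHb : MemHb ζ m φ :=
    memHb_congr (hmul (fun _ => 1) (memHb_const ζ m 1)) (fun z _ => mul_one _)
  obtain ⟨g, p, hg, hp, heq⟩ := hφHb
  have hcontF : ContinuousOn (fun z => (∏ j, (z - ζ j) ^ m j) * g z + p.eval z)
      (ball (0:ℂ) 1) := by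
    apply ContinuousOn.add
    · exact (Continuous.continuousOn (continuous_finset_prod _ fun j _ =>
        (continuous_id.sub continuous_const).pow _)).mul hg.1.continuousOn
    · exact p.continuous_aeval.continuousOn
  have hΛ0 : Λ 0 ∈ ball (0:ℂ) 1 := mem_ball_zero_iff.mpr (hΛ 0)
  have hCA : ContinuousAt (fun z => (∏ j, (z - ζ j) ^ m j) * g z + p.eval z) (Λ 0) :=
    hcontF.continuousAt (isOpen_ball.mem_nhds hΛ0)
  have hcomp := (hCA.tendsto).comp htend
  have hvals : ∀ k, (∏ j, (Λ (s k + 1) - ζ j) ^ m j) * g (Λ (s k + 1)) +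
      p.eval (Λ (s k + 1)) = v (s k) := by
    intro k
    rw [← heq _ (mem_ball_zero_iff.mpr (hΛ (s k + 1)))]
    exact hval (s k)
  have hveven : ∀ k, v (s (2*k)) = 1 := fun k => if_pos ⟨2*k, rfl, even_two_mul k⟩
  have hvodd : ∀ k, v (s (2*k+1)) = 0 := by
    intro k
    apply if_neg
    rintro ⟨k', h1, h2⟩
    have hk' : k' = 2*k+1 := hsinj h1
    subst hk'
    exact (Nat.even_add_one.mp h2) (even_two_mul k)
  have h2k : Tendsto (fun k : ℕ => 2*k) atTop atTop :=
    tendsto_atTop_mono (fun k => by change k ≤ _; omega) tendsto_id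
  have h2k1 : Tendsto (fun k : ℕ => 2*k+1) atTop atTop :=
    tendsto_atTop_mono (fun k => by change k ≤ _; omega) tendsto_id
  have hc2 : Tendsto (fun k => v (s k)) atTop
      (𝓝 ((∏ j, (Λ 0 - ζ j) ^ m j) * g (Λ 0) + p.eval (Λ 0))) :=
    hcomp.congr fun k => hvals k
  have he1 : ((∏ j, (Λ 0 - ζ j) ^ m j) * g (Λ 0) + p.eval (Λ 0)) = 1 :=
    tendsto_nhds_unique ((hc2.comp h2k).congr fun k => hveven k) tendsto_const_nhds
  have he0 : ((∏ j, (Λ 0 - ζ j) ^ m j) * g (Λ 0) + p.eval (Λ 0)) = 0 :=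
    tendsto_nhds_unique ((hc2.comp h2k1).congr fun k => hvodd k) tendsto_const_nhds
  exact one_ne_zero (he1 ▸ he0)

/-- **Lemma (adding a point).** Let `b` be rational, non-inner, in the closed unit ball of
`H^∞` with `‖b‖_∞ = 1`, with Pythagorean mate `a` whose circle zeros are `ζ j` with
multiplicities `m j`.  If `(Λ n)_{n ≥ 1}` is multiplier interpolating for `H(b)` and
`Λ 0 ∈ 𝔻` is not one of the `Λ n`, `n ≥ 1`, then the augmented sequence `(Λ n)_{n ≥ 0}` is
multiplier interpolating for `H(b)`. -/
theorem statement12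
    (b a : ℂ → ℂ) (l : ℕ) (ζ : Fin l → ℂ) (m : Fin l → ℕ)
    (hζ : ∀ j, ‖ζ j‖ = 1) (hζinj : Function.Injective ζ) (hm : ∀ j, 1 ≤ m j)
    (hb_rat : ∃ P Q : Polynomial ℂ, (∀ z : ℂ, ‖z‖ ≤ 1 → Q.eval z ≠ 0) ∧
      ∀ z : ℂ, ‖z‖ ≤ 1 → b z = P.eval z / Q.eval z)
    (hb_le : ∀ z : ℂ, ‖z‖ ≤ 1 → ‖b z‖ ≤ 1)
    (hb_norm : ∃ z : ℂ, ‖z‖ = 1 ∧ ‖b z‖ = 1)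
    (hb_noninner : ∃ z : ℂ, ‖z‖ = 1 ∧ ‖b z‖ < 1)
    (ha_form : ∃ P Q : Polynomial ℂ, (∀ z : ℂ, ‖z‖ ≤ 1 → P.eval z ≠ 0 ∧ Q.eval z ≠ 0) ∧
      ∀ z : ℂ, ‖z‖ ≤ 1 → a z = (∏ j, (z - ζ j) ^ m j) * P.eval z / Q.eval z)
    (ha_le : ∀ z : ℂ, ‖z‖ ≤ 1 → ‖a z‖ ≤ 1)
    (ha0 : 0 < (a 0).re ∧ (a 0).im = 0)
    (hab : ∀ z : ℂ, ‖z‖ = 1 → ‖a z‖ ^ 2 + ‖b z‖ ^ 2 = 1)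
    -- the sequence: `Λ 0` is the added point, `(Λ (n+1))_n` is the original sequence
    (Λ : ℕ → ℂ) (hΛ : ∀ n, ‖Λ n‖ < 1)
    (hinterp : MultInterp ζ m fun n => Λ (n + 1))
    (hnew : ∀ n : ℕ, Λ 0 ≠ Λ (n + 1)) :
    MultInterp ζ m Λ := by
  classical
  intro v hvC
  obtain ⟨Cv, hCv⟩ := hvC
  obtain ⟨δ, hδ, hsep⟩ := sep_lemma ζ m Λ hΛ hinterp hnew
  have hCv0 : 0 ≤ Cv := le_trans (norm_nonneg _) (hCv 0)
  have hwB : ∀ n, ‖(v (n+1) - v 0) * (Λ (n+1) - Λ 0)⁻¹‖ ≤ 2 * Cv * δ⁻¹ := by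
    intro n
    rw [norm_mul, norm_inv]
    have h1 : ‖v (n+1) - v 0‖ ≤ 2 * Cv := by
      have := hCv (n+1); have := hCv 0
      calc ‖v (n+1) - v 0‖ ≤ ‖v (n+1)‖ + ‖v 0‖ := norm_sub_le _ _
        _ ≤ 2 * Cv := by linarith
    have h2 : ‖Λ (n+1) - Λ 0‖⁻¹ ≤ δ⁻¹ :=
      inv_anti₀ hδ (hsep n)
    exact mul_le_mul h1 h2 (by positivity) (by positivity)
  obtain ⟨φ, hmul, hval⟩ := hinterp (fun n => (v (n+1) - v 0) * (Λ (n+1) - Λ 0)⁻¹)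
    ⟨2 * Cv * δ⁻¹, hwB⟩
  refine ⟨fun z => v 0 + (z - Λ 0) * φ z, ?_, ?_⟩
  · intro f hf
    have h1 := memHb_smul (v 0) hf
    have h3 := memHb_mul_linear (Λ 0) (hmul f hf)
    exact memHb_congr (memHb_add h1 h3) (fun z _ => by ring)
  · intro n
    cases n with
    | zero => simp
    | succ n =>
      show v 0 + (Λ (n+1) - Λ 0) * φ (Λ (n+1)) = v (n+1)
      rw [hval n]
      have hne : Λ (n+1) - Λ 0 ≠ 0 := sub_ne_zero.mpr (Ne.symm (hnew n))
      field_simp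
      ring
end
end

section
/- Let ζ ∈ 𝕋, let M ≥ 1 be an integer, and let Λ(ω) = (r_n e^{iϑ_n(ω)})_{n∈ℕ} be a random sequence with fixed radii 0 ≤ r_n < 1 and (ϑ_n) independent uniform on [0,2π]. Then the probability of the event { Σ_{n∈ℕ} (1−r_n²)/|ζ−λ_n(ω)|^{2M} < ∞ } equals 1 if Σ_{n∈ℕ} (1−r_n²)^{1/(2M)} < ∞, and equals 0 otherwise. -/
open Complex MeasureTheory Set Filter ProbabilityTheory
open scoped ENNReal Topology

noncomputable section

lemma st14_norm_sq (a t r : ℝ) :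
    ‖Complex.exp ((a:ℂ) * I) - (r:ℂ) * Complex.exp ((t:ℂ) * I)‖ ^ 2
      = 1 + r ^ 2 - 2 * r * Real.cos (t - a) := by
  rw [Complex.exp_mul_I, Complex.exp_mul_I]
  have h : Complex.cos a + Complex.sin a * I - r * (Complex.cos t + Complex.sin t * I)
      = ((Real.cos a - r * Real.cos t : ℝ) : ℂ) + ((Real.sin a - r * Real.sin t : ℝ) : ℂ) * I := by
    push_cast [← Complex.ofReal_cos, ← Complex.ofReal_sin]
    ring
  rw [h, Complex.sq_norm, Complex.normSq_add_mul_I]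
  have h1 := Real.sin_sq_add_cos_sq a
  have h2 := Real.sin_sq_add_cos_sq t
  have h3 := Real.cos_sub t a
  linear_combination h1 + r^2 * h2 + 2*r*h3

lemma st14_cos_norm (s : ℝ) : Real.cos ‖((s : ℝ) : AddCircle (2 * Real.pi))‖ = Real.cos s := by
  rw [AddCircle.norm_eq, Real.cos_abs, Real.cos_sub_int_mul_two_pi]

lemma st14_measure_ball {Ω : Type*} [MeasurableSpace Ω] (μ : Measure Ω)
    (g : Ω → ℝ) (hg : Measurable g)
    (hu : Measure.map g μ
      = (ENNReal.ofReal (2 * Real.pi))⁻¹ • volume.restrict (Set.Icc (0:ℝ) (2*Real.pi)))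
    (β : AddCircle (2 * Real.pi)) (t : ℝ) :
    μ {ω | dist ((g ω : AddCircle (2 * Real.pi))) β ≤ t}
      = (ENNReal.ofReal (2 * Real.pi))⁻¹ * ENNReal.ofReal (min (2 * Real.pi) (2 * t)) := by
  haveI : Fact (0 < 2 * Real.pi) := ⟨by positivity⟩
  have hcont : Continuous (fun x : ℝ => ((x : AddCircle (2*Real.pi)))) :=
    AddCircle.continuous_mk' _
  set S : Set ℝ := ((↑) : ℝ → AddCircle (2*Real.pi)) ⁻¹' (Metric.closedBall β t) with hSdef
  have hSm : MeasurableSet S := (Metric.isClosed_closedBall.preimage hcont).measurableSet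
  have h1 : {ω | dist ((g ω : AddCircle (2*Real.pi))) β ≤ t} = g ⁻¹' S := rfl
  rw [h1, ← Measure.map_apply hg hSm, hu, Measure.smul_apply, smul_eq_mul,
    Measure.restrict_apply hSm]
  congr 1
  have h2 : volume (S ∩ Icc 0 (2*Real.pi)) = volume (S ∩ Ioc 0 (0 + 2*Real.pi)) := by
    rw [← Measure.restrict_apply hSm, ← Measure.restrict_apply hSm,
      restrict_Ioc_eq_restrict_Icc, zero_add]
  have h3 : volume (S ∩ Ioc 0 (0 + 2*Real.pi))
      = (volume : Measure (AddCircle (2*Real.pi))) (Metric.closedBall β t) := by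
    rw [← Measure.restrict_apply hSm]
    exact (AddCircle.measurePreserving_mk (2*Real.pi) 0).measure_preimage
      Metric.isClosed_closedBall.measurableSet.nullMeasurableSet
  rw [h2, h3, AddCircle.volume_closedBall]

lemma st14_ofReal_tsum_eq_top {g : ℕ → ℝ} (hg : ∀ n, 0 ≤ g n) (h : ¬ Summable g) :
    ∑' n, ENNReal.ofReal (g n) = ∞ := by
  by_contra htop
  apply h
  have h1 : Summable (fun n => Real.toNNReal (g n)) :=
    ENNReal.tsum_coe_ne_top_iff_summable.1 (by simpa [ENNReal.ofReal] using htop)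
  exact (NNReal.summable_coe.2 h1).congr fun n => Real.coe_toNNReal _ (hg n)

set_option maxHeartbeats 1600000 in
/-- **Lemma (random 0-1 law for the Ahern-Clark type sums).** Let `ζ ∈ 𝕋`, `M ≥ 1`, and let
`λ n(ω) = r n · e^{i θ n ω}` be a random sequence with fixed radii `0 ≤ r n < 1` and `(θ n)`
independent, uniform on `[0,2π]`.  Then
`P( ∑_n (1-r n²)/|ζ - λ n|^{2M} < ∞ ) = 1` if `∑_n (1-r n²)^{1/(2M)} < ∞`, and `= 0`
otherwise. -/
theorem statement14
    {Ω : Type*} [MeasurableSpace Ω] (μ : Measure Ω) [IsProbabilityMeasure μ]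
    (θ : ℕ → Ω → ℝ) (hmeas : ∀ n, Measurable (θ n))
    (hindep : iIndepFun θ μ)
    (hunif : ∀ n, Measure.map (θ n) μ =
      (ENNReal.ofReal (2 * Real.pi))⁻¹ • volume.restrict (Set.Icc (0 : ℝ) (2 * Real.pi)))
    (r : ℕ → ℝ) (hr : ∀ n, 0 ≤ r n ∧ r n < 1)
    (ζ : ℂ) (hζ : ‖ζ‖ = 1) (M : ℕ) (hM : 1 ≤ M) :
    (Summable (fun n => (1 - r n ^ 2) ^ ((1 : ℝ) / (2 * M))) →
      μ {ω | Summable fun n =>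
        (1 - r n ^ 2) / ‖ζ - (r n : ℂ) * Complex.exp ((θ n ω : ℂ) * Complex.I)‖ ^ (2 * M)} = 1) ∧
    (¬ Summable (fun n => (1 - r n ^ 2) ^ ((1 : ℝ) / (2 * M))) →
      μ {ω | Summable fun n =>
        (1 - r n ^ 2) / ‖ζ - (r n : ℂ) * Complex.exp ((θ n ω : ℂ) * Complex.I)‖ ^ (2 * M)} = 0) := by
  haveI fact2pi : Fact (0 < 2 * Real.pi) := ⟨by positivity⟩
  have hπ := Real.pi_pos
  have hπ3 := Real.pi_gt_three
  have hM1 : (1:ℝ) ≤ (M:ℝ) := by exact_mod_cast hM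
  set α : ℝ := ζ.arg with hαdef
  have hζeq : ζ = Complex.exp ((α:ℂ) * I) := by
    have h := Complex.norm_mul_exp_arg_mul_I ζ
    have habs : ‖ζ‖ = 1 := hζ
    rw [habs] at h
    simpa using h.symm
  -- notation
  have hε0 : ∀ n, 0 < 1 - r n ^ 2 := fun n => by nlinarith [(hr n).1, (hr n).2]
  have hε1 : ∀ n, 1 - r n ^ 2 ≤ 1 := fun n => by nlinarith [(hr n).1]
  set δ : ℕ → ℝ := fun n => (1 - r n ^ 2) ^ ((1:ℝ)/(2*M)) with hδdef
  have hδn : ∀ n, δ n = (1 - r n ^ 2) ^ ((1:ℝ)/(2*(M:ℝ))) := fun n => rfl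
  have hδ0 : ∀ n, 0 < δ n := fun n => Real.rpow_pos_of_pos (hε0 n) _
  have hδ1 : ∀ n, δ n ≤ 1 := fun n => Real.rpow_le_one (hε0 n).le (hε1 n) (by positivity)
  have hεδ : ∀ n, 1 - r n ^ 2 ≤ δ n := fun n => by
    have h := Real.rpow_le_rpow_of_exponent_ge (hε0 n) (hε1 n)
      (show (1:ℝ)/(2*(M:ℝ)) ≤ 1 by rw [div_le_one (by positivity)]; linarith)
    rw [Real.rpow_one] at h
    exact h
  have hMne : (2*(M:ℝ)) ≠ 0 := by positivity
  have hδpow : ∀ n, δ n ^ (2*M) = 1 - r n ^ 2 := fun n => by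
    have hcast : ((2*M : ℕ) : ℝ) = 2*(M:ℝ) := by push_cast; ring
    rw [hδn n, ← Real.rpow_natCast ((1 - r n ^ 2) ^ ((1:ℝ)/(2*(M:ℝ)))) (2*M),
      ← Real.rpow_mul (hε0 n).le, hcast, one_div_mul_cancel hMne, Real.rpow_one]
  -- the deterministic norm identity
  have Hnorm : ∀ (n : ℕ) (x : ℝ),
      ‖ζ - (r n : ℂ) * Complex.exp ((x:ℂ) * Complex.I)‖ ^ (2*M)
        = (1 + r n ^ 2 - 2 * r n * Real.cos
            (dist ((x : AddCircle (2*Real.pi))) ((α : AddCircle (2*Real.pi))))) ^ M := by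
    intro n x
    have hcosd : Real.cos (x - α)
        = Real.cos (dist ((x : AddCircle (2*Real.pi))) ((α : AddCircle (2*Real.pi)))) := by
      rw [dist_eq_norm]
      have hsub : ((x : AddCircle (2*Real.pi)) - (α : AddCircle (2*Real.pi)))
          = ((x - α : ℝ) : AddCircle (2*Real.pi)) := rfl
      rw [hsub, st14_cos_norm]
    rw [pow_mul, hζeq, st14_norm_sq, hcosd]
  have Hfpos : ∀ (n : ℕ) (x : ℝ), 0 < 1 + r n ^ 2 - 2 * r n * Real.cos x := by
    intro n x
    nlinarith [(hr n).1, (hr n).2, Real.cos_le_one x, Real.neg_one_le_cos x]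
  have hDle : ∀ x : ℝ,
      dist ((x : AddCircle (2*Real.pi))) ((α : AddCircle (2*Real.pi))) ≤ Real.pi := by
    intro x
    rw [dist_eq_norm]
    have h := AddCircle.norm_le_half_period (p := 2*Real.pi)
      (x := (x : AddCircle (2*Real.pi)) - (α : AddCircle (2*Real.pi)))
      (by positivity)
    rw [abs_of_pos (by positivity)] at h
    linarith
  have Hmeasball : ∀ (n : ℕ) (t : ℝ),
      μ {ω | dist ((θ n ω : AddCircle (2*Real.pi))) ((α : AddCircle (2*Real.pi))) ≤ t}
        = (ENNReal.ofReal (2*Real.pi))⁻¹ * ENNReal.ofReal (min (2*Real.pi) (2*t)) :=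
    fun n t => st14_measure_ball μ (θ n) (hmeas n) (hunif n) _ t
  have HmeasUB : ∀ (n : ℕ) (t : ℝ),
      μ {ω | dist ((θ n ω : AddCircle (2*Real.pi))) ((α : AddCircle (2*Real.pi))) ≤ t}
        ≤ ENNReal.ofReal (t / Real.pi) := by
    intro n t
    rw [Hmeasball n t]
    have h1 : (ENNReal.ofReal (2*Real.pi))⁻¹ * ENNReal.ofReal (min (2*Real.pi) (2*t))
        ≤ (ENNReal.ofReal (2*Real.pi))⁻¹ * ENNReal.ofReal (2*t) :=
      mul_le_mul_right (ENNReal.ofReal_le_ofReal (min_le_right _ _)) _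
    refine h1.trans (le_of_eq ?_)
    rw [← ENNReal.div_eq_inv_mul, ← ENNReal.ofReal_div_of_pos (by positivity)]
    congr 1
    rw [mul_div_mul_left _ _ (two_ne_zero)]
  have hFcont : ∀ n, Continuous (fun x : ℝ =>
      (1 - r n ^ 2) / ‖ζ - (r n:ℂ) * Complex.exp ((x:ℂ) * Complex.I)‖ ^ (2*M)) := by
    intro n
    refine continuous_const.div (by fun_prop) ?_
    intro x
    rw [Hnorm n x]
    exact (pow_pos (Hfpos n _) M).ne'
  constructor
  · -- convergence direction
    intro hsum
    have hsumδ : Summable δ := hsum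
    set C : ℝ := 2 + 4 * (Real.pi^2/2)^M with hCdef
    have hCπ0 : (0:ℝ) ≤ (Real.pi^2/2)^M := by positivity
    have hC2 : (2:ℝ) ≤ C := by rw [hCdef]; nlinarith
    set Y : ℕ → Ω → ℝ≥0∞ := fun n ω => ENNReal.ofReal
      (min ((1 - r n ^ 2) / ‖ζ - (r n : ℂ) * Complex.exp ((θ n ω : ℂ) * Complex.I)‖ ^ (2 * M)) 1)
      with hYdef
    have hYmeas : ∀ n, Measurable (Y n) := fun n =>
      ENNReal.measurable_ofReal.comp
        ((((hFcont n).measurable).comp (hmeas n)).min measurable_const)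
    have hI : ∀ n, ∫⁻ ω, Y n ω ∂μ ≤ ENNReal.ofReal (C * δ n) := by
      intro n
      by_cases hrn : r n ≤ 1/2
      · -- small radius: trivial bound
        have h34 : (3:ℝ)/4 ≤ δ n := by
          have h1 : (3:ℝ)/4 ≤ 1 - r n ^ 2 := by nlinarith [(hr n).1]
          linarith [hεδ n]
        have hpt : ∀ ω, Y n ω ≤ ENNReal.ofReal (C * δ n) := by
          intro ω
          apply ENNReal.ofReal_le_ofReal
          have h2 : min ((1 - r n ^ 2) /
            ‖ζ - (r n : ℂ) * Complex.exp ((θ n ω : ℂ) * Complex.I)‖ ^ (2 * M)) 1 ≤ 1 :=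
            min_le_right _ _
          nlinarith [hδ0 n]
        calc ∫⁻ ω, Y n ω ∂μ ≤ ∫⁻ _, ENNReal.ofReal (C * δ n) ∂μ := lintegral_mono hpt
          _ = ENNReal.ofReal (C * δ n) := by simp
      · push_neg at hrn
        set q : ℝ := ((1:ℝ)/2)^(2*M) with hqdef
        have hq0 : 0 ≤ q := by positivity
        have hq14 : q ≤ 1/4 := by
          have h1 : ((1:ℝ)/2)^(2*M) ≤ ((1:ℝ)/2)^2 :=
            pow_le_pow_of_le_one (by norm_num) (by norm_num) (by omega)
          rw [hqdef]; nlinarith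
        set Cπ : ℝ := (Real.pi^2/2)^M with hCπdef
        set c : ℕ → ℝ := fun k => Nat.casesOn k 1 (fun j => Cπ * q^j) with hcdef
        have hc0 : ∀ k, 0 ≤ c k := by
          intro k
          cases k with
          | zero => norm_num [hcdef]
          | succ j => show (0:ℝ) ≤ Cπ * q^j; positivity
        set B : ℕ → Set Ω := fun k =>
          {ω | dist ((θ n ω : AddCircle (2*Real.pi))) ((α : AddCircle (2*Real.pi))) ≤ 2^k * δ n}
          with hBdef
        have hDmeas : Measurable (fun ω =>
            dist ((θ n ω : AddCircle (2*Real.pi))) ((α : AddCircle (2*Real.pi)))) :=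
          (((AddCircle.continuous_mk' (2*Real.pi)).dist continuous_const).measurable).comp (hmeas n)
        have hBmeas : ∀ k, MeasurableSet (B k) := fun k => hDmeas measurableSet_Iic
        have hpt : ∀ ω, Y n ω ≤ ∑' k, (B k).indicator (fun _ => ENNReal.ofReal (c k)) ω := by
          intro ω
          set d : ℝ := dist ((θ n ω : AddCircle (2*Real.pi))) ((α : AddCircle (2*Real.pi)))
            with hddef
          have hd0 : 0 ≤ d := dist_nonneg
          by_cases hd : d ≤ δ n
          · refine le_trans ?_ (ENNReal.le_tsum 0)
            have hmem : ω ∈ B 0 := by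
              show d ≤ 2^0 * δ n
              simpa using hd
            rw [indicator_of_mem hmem]
            exact ENNReal.ofReal_le_ofReal (by simpa [hcdef] using min_le_right _ (1:ℝ))
          · push_neg at hd
            have hex : ∃ m : ℕ, d ≤ 2^m * δ n := by
              obtain ⟨m, hm⟩ := pow_unbounded_of_one_lt (Real.pi / δ n) (one_lt_two (α := ℝ))
              refine ⟨m, ?_⟩
              have h2 : Real.pi / δ n * δ n = Real.pi := div_mul_cancel₀ _ (hδ0 n).ne'
              have h3 : d ≤ Real.pi := hDle (θ n ω)
              nlinarith [hδ0 n, (le_of_lt hm)]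
            have hk1 : d ≤ 2^(Nat.find hex) * δ n := Nat.find_spec hex
            have hkne : Nat.find hex ≠ 0 := by
              intro h0
              rw [h0] at hk1
              simp only [pow_zero, one_mul] at hk1
              linarith
            obtain ⟨j, hj⟩ : ∃ j, Nat.find hex = j + 1 :=
              ⟨Nat.find hex - 1, (Nat.succ_pred_eq_of_pos (Nat.pos_of_ne_zero hkne)).symm⟩
            have hmin : 2^j * δ n < d := by
              have h4 := Nat.find_min hex (by omega : j < Nat.find hex)
              exact lt_of_not_ge h4
            have hmem : ω ∈ B (j+1) := by
              show d ≤ 2^(j+1) * δ n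
              rw [← hj]; exact hk1
            refine le_trans ?_ (ENNReal.le_tsum (j+1))
            rw [indicator_of_mem hmem]
            apply ENNReal.ofReal_le_ofReal
            refine le_trans (min_le_left _ _) ?_
            -- main numeric bound
            rw [Hnorm n (θ n ω), ← hddef]
            have hcos : Real.cos d ≤ 1 - 2/Real.pi^2 * d^2 :=
              Real.cos_le_one_sub_mul_cos_sq (by rw [_root_.abs_of_nonneg hd0]; exact hDle (θ n ω))
            have hA : (0:ℝ) ≤ 2/Real.pi^2 := by positivity
            have hflb : 2/Real.pi^2 * d^2 ≤ 1 + r n ^ 2 - 2 * r n * Real.cos d := by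
              have h2r : (0:ℝ) ≤ 2 * r n := by linarith [(hr n).1]
              have F1 := mul_le_mul_of_nonneg_left hcos h2r
              have P1 : 0 ≤ (2 * r n - 1) * (2/Real.pi^2 * d^2) :=
                mul_nonneg (by linarith) (mul_nonneg hA (sq_nonneg d))
              linarith [F1, P1, sq_nonneg (1 - r n)]
            have hdpos : 0 < d := lt_of_le_of_lt (hδ0 n).le hd
            have hlb0 : 0 < 2/Real.pi^2 * (2^j * δ n)^2 :=
              mul_pos (by positivity) (pow_pos (mul_pos (by positivity) (hδ0 n)) 2)
            have hlb1 : 2/Real.pi^2 * (2^j * δ n)^2 ≤ 2/Real.pi^2 * d^2 := by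
              have h9 : (2^j * δ n)^2 ≤ d^2 :=
                pow_le_pow_left₀ (mul_nonneg (by positivity) (hδ0 n).le) hmin.le 2
              exact mul_le_mul_of_nonneg_left h9 hA
            have hkey : c (j+1) = (1 - r n ^ 2) / (2/Real.pi^2 * (2^j * δ n)^2)^M := by
              show Cπ * q^j = (1 - r n ^ 2) / (2/Real.pi^2 * (2^j * δ n)^2)^M
              rw [← hδpow n, hCπdef, hqdef]
              rw [eq_div_iff (by positivity : ((2/Real.pi^2 * (2^j * δ n)^2)^M : ℝ) ≠ 0)]
              field_simp
              have e1 : Real.pi ^ (M*2) * Real.pi⁻¹ ^ (M*2) = 1 := by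
                rw [← mul_pow, mul_inv_cancel₀ hπ.ne', one_pow]
              have e2 : ((1:ℝ)/2) ^ M * 2 ^ M = 1 := by rw [← mul_pow]; norm_num
              have e3 : ((1:ℝ)/2) ^ (M*j*2) * 2 ^ (M*j*2) = 1 := by rw [← mul_pow]; norm_num
              linear_combination δ n ^ (M*2) * (((1:ℝ)/2)^M*2^M) * (((1:ℝ)/2)^(M*j*2)*2^(M*j*2)) * e1
                + δ n ^ (M*2) * (((1:ℝ)/2)^(M*j*2)*2^(M*j*2)) * e2 + δ n ^ (M*2) * e3
            rw [hkey]
            apply div_le_div_of_nonneg_left (hε0 n).le (pow_pos hlb0 M)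
            exact pow_le_pow_left₀ hlb0.le (le_trans hlb1 hflb) M
        have hintB : ∀ k, μ (B k) ≤ ENNReal.ofReal ((2^k * δ n)/Real.pi) := fun k =>
          HmeasUB n (2^k * δ n)
        have hint : ∫⁻ ω, Y n ω ∂μ ≤ ∑' k, ENNReal.ofReal (c k * ((2^k * δ n)/Real.pi)) := by
          calc ∫⁻ ω, Y n ω ∂μ
              ≤ ∫⁻ ω, ∑' k, (B k).indicator (fun _ => ENNReal.ofReal (c k)) ω ∂μ :=
                lintegral_mono hpt
            _ = ∑' k, ∫⁻ ω, (B k).indicator (fun _ => ENNReal.ofReal (c k)) ω ∂μ :=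
                lintegral_tsum (fun k => (measurable_const.indicator (hBmeas k)).aemeasurable)
            _ = ∑' k, ENNReal.ofReal (c k) * μ (B k) := by
                refine tsum_congr (fun k => ?_)
                rw [lintegral_indicator_const (hBmeas k)]
            _ ≤ ∑' k, ENNReal.ofReal (c k) * ENNReal.ofReal ((2^k * δ n)/Real.pi) :=
                ENNReal.tsum_le_tsum (fun k => mul_le_mul_right (hintB k) _)
            _ = ∑' k, ENNReal.ofReal (c k * ((2^k * δ n)/Real.pi)) := by
                refine tsum_congr (fun k => ?_)
                rw [← ENNReal.ofReal_mul (hc0 k)]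
        set t : ℕ → ℝ := fun k => c k * ((2^k * δ n)/Real.pi) with htdef
        have ht0 : ∀ k, 0 ≤ t k := fun k =>
          mul_nonneg (hc0 k) (div_nonneg (mul_nonneg (by positivity) (hδ0 n).le) hπ.le)
        have ht1 : ∀ j : ℕ, t (j+1) = (2*Cπ*(δ n)/Real.pi) * (2*q)^j := by
          intro j
          show Cπ * q^j * ((2^(j+1) * δ n)/Real.pi) = (2*Cπ*(δ n)/Real.pi) * (2*q)^j
          rw [mul_pow, pow_succ]
          ring
        have h2q : 2*q < 1 := by linarith
        have h2q0 : 0 ≤ 2*q := by linarith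
        have hgeom : Summable (fun j : ℕ => (2*Cπ*(δ n)/Real.pi) * (2*q)^j) :=
          (summable_geometric_of_lt_one h2q0 h2q).mul_left _
        have hts : Summable t := by
          rw [← summable_nat_add_iff 1]
          exact hgeom.congr (fun j => (ht1 j).symm)
        have htsum : ∑' k, t k ≤ C * δ n := by
          rw [hts.tsum_eq_zero_add]
          have h0 : t 0 = δ n / Real.pi := by
            show (1:ℝ) * ((2^0 * δ n)/Real.pi) = δ n / Real.pi
            norm_num
          have hrest : ∑' j, t (j+1) = (2*Cπ*(δ n)/Real.pi) * (1 - 2*q)⁻¹ := by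
            have := tsum_geometric_of_lt_one h2q0 h2q
            calc ∑' j, t (j+1) = ∑' j, (2*Cπ*(δ n)/Real.pi) * (2*q)^j := tsum_congr ht1
              _ = (2*Cπ*(δ n)/Real.pi) * ∑' j, (2*q)^j := tsum_mul_left
              _ = (2*Cπ*(δ n)/Real.pi) * (1 - 2*q)⁻¹ := by rw [this]
          rw [h0, hrest]
          have hinv : (1 - 2*q)⁻¹ ≤ 2 := by
            have h5 : (1:ℝ)/2 ≤ 1 - 2*q := by linarith
            have h6 : (0:ℝ) < 1 - 2*q := by linarith
            rw [inv_le_comm₀ h6 (by norm_num)]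
            linarith
          have hπ1 : 1 ≤ Real.pi := by linarith
          have hδpos := (hδ0 n).le
          have hCπpos : 0 ≤ Cπ := by rw [hCπdef]; positivity
          have hnum0 : (0:ℝ) ≤ 2*Cπ*(δ n) := mul_nonneg (by linarith) hδpos
          have hfrac : 2*Cπ*(δ n)/Real.pi ≤ 2*Cπ*(δ n) := div_le_self hnum0 hπ1
          have h7 : (2*Cπ*(δ n)/Real.pi) * (1 - 2*q)⁻¹ ≤ (2*Cπ*(δ n)) * 2 := by
            apply mul_le_mul hfrac hinv (inv_nonneg.mpr (by linarith)) hnum0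
          have h8 : δ n / Real.pi ≤ δ n := div_le_self hδpos hπ1
          rw [hCdef]
          nlinarith
        calc ∫⁻ ω, Y n ω ∂μ ≤ ∑' k, ENNReal.ofReal (t k) := hint
          _ = ENNReal.ofReal (∑' k, t k) := (ENNReal.ofReal_tsum_of_nonneg ht0 hts).symm
          _ ≤ ENNReal.ofReal (C * δ n) := ENNReal.ofReal_le_ofReal htsum
    -- summing the integrals
    have hsumC : Summable (fun n => C * δ n) := hsumδ.mul_left C
    have hsumInt : ∑' n, ∫⁻ ω, Y n ω ∂μ ≠ ⊤ := by
      refine ne_top_of_le_ne_top ?_ (ENNReal.tsum_le_tsum hI)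
      rw [← ENNReal.ofReal_tsum_of_nonneg
        (fun n => mul_nonneg (by linarith : (0:ℝ) ≤ C) (hδ0 n).le) hsumC]
      exact ENNReal.ofReal_ne_top
    have hlt : ∫⁻ ω, ∑' n, Y n ω ∂μ ≠ ⊤ := by
      rw [lintegral_tsum (fun n => (hYmeas n).aemeasurable)]
      exact hsumInt
    have hae : ∀ᵐ ω ∂μ, ∑' n, Y n ω < ⊤ :=
      ae_lt_top (by exact Measurable.ennreal_tsum hYmeas) hlt
    have hnull : μ {ω | ¬ (∑' n, Y n ω < ⊤)} = 0 := ae_iff.1 hae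
    have hsub : {ω | ¬ Summable fun n =>
        (1 - r n ^ 2) / ‖ζ - (r n : ℂ) * Complex.exp ((θ n ω : ℂ) * Complex.I)‖ ^ (2 * M)}
        ⊆ {ω | ¬ (∑' n, Y n ω < ⊤)} := by
      intro ω hω
      simp only [mem_setOf_eq] at hω ⊢
      intro hfin
      apply hω
      -- from finiteness of the ENNReal sum deduce summability
      have h1 : Summable (fun n => Real.toNNReal
          (min ((1 - r n ^ 2) /
            ‖ζ - (r n : ℂ) * Complex.exp ((θ n ω : ℂ) * Complex.I)‖ ^ (2 * M)) 1)) := by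
        apply ENNReal.tsum_coe_ne_top_iff_summable.1
        simpa [hYdef, ENNReal.ofReal] using hfin.ne
      have h2 : Summable (fun n =>
          min ((1 - r n ^ 2) /
            ‖ζ - (r n : ℂ) * Complex.exp ((θ n ω : ℂ) * Complex.I)‖ ^ (2 * M)) 1) := by
        refine (NNReal.summable_coe.2 h1).congr (fun n => Real.coe_toNNReal _ ?_)
        have hden : 0 < ‖ζ - (r n : ℂ) * Complex.exp ((θ n ω : ℂ) * Complex.I)‖ ^ (2 * M) := by
          rw [Hnorm n (θ n ω)]; exact pow_pos (Hfpos n _) M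
        have : 0 ≤ (1 - r n ^ 2) /
            ‖ζ - (r n : ℂ) * Complex.exp ((θ n ω : ℂ) * Complex.I)‖ ^ (2 * M) :=
          div_nonneg (hε0 n).le hden.le
        exact le_min this zero_le_one
      have h3 : ∀ᶠ n in atTop, min ((1 - r n ^ 2) /
          ‖ζ - (r n : ℂ) * Complex.exp ((θ n ω : ℂ) * Complex.I)‖ ^ (2 * M)) 1 < 1 :=
        h2.tendsto_atTop_zero.eventually_lt_const one_pos
      obtain ⟨N, hN⟩ := eventually_atTop.1 h3
      have h4 : ∀ n ≥ N, min ((1 - r n ^ 2) /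
          ‖ζ - (r n : ℂ) * Complex.exp ((θ n ω : ℂ) * Complex.I)‖ ^ (2 * M)) 1
          = (1 - r n ^ 2) /
            ‖ζ - (r n : ℂ) * Complex.exp ((θ n ω : ℂ) * Complex.I)‖ ^ (2 * M) := by
        intro n hn
        have := hN n hn
        rcases min_cases ((1 - r n ^ 2) /
          ‖ζ - (r n : ℂ) * Complex.exp ((θ n ω : ℂ) * Complex.I)‖ ^ (2 * M)) 1 with h | h
        · exact h.1
        · exfalso; rw [h.1] at this; exact lt_irrefl _ this
      have h5 : Summable (fun k => min ((1 - r (k+N) ^ 2) /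
          ‖ζ - (r (k+N) : ℂ) * Complex.exp ((θ (k+N) ω : ℂ) * Complex.I)‖ ^ (2 * M)) 1) :=
        (summable_nat_add_iff N).2 h2
      have h6 : Summable (fun k => (1 - r (k+N) ^ 2) /
          ‖ζ - (r (k+N) : ℂ) * Complex.exp ((θ (k+N) ω : ℂ) * Complex.I)‖ ^ (2 * M)) :=
        h5.congr (fun k => h4 (k+N) (Nat.le_add_left N k))
      exact (summable_nat_add_iff N).1 h6
    have h0 : μ ({ω | Summable fun n =>
        (1 - r n ^ 2) / ‖ζ - (r n : ℂ) * Complex.exp ((θ n ω : ℂ) * Complex.I)‖ ^ (2 * M)}ᶜ)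
        = 0 := by
      rw [compl_setOf]
      exact measure_mono_null hsub hnull
    refine le_antisymm prob_le_one ?_
    have hle := measure_union_le (μ := μ)
      {ω | Summable fun n =>
        (1 - r n ^ 2) / ‖ζ - (r n : ℂ) * Complex.exp ((θ n ω : ℂ) * Complex.I)‖ ^ (2 * M)}
      ({ω | Summable fun n =>
        (1 - r n ^ 2) / ‖ζ - (r n : ℂ) * Complex.exp ((θ n ω : ℂ) * Complex.I)‖ ^ (2 * M)}ᶜ)
    rw [union_compl_self, measure_univ, h0, add_zero] at hle
    exact hle
  · -- divergence direction
    intro hnsum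
    have hnsumδ : ¬ Summable δ := hnsum
    -- auxiliary exponent e = ε^(1/M)
    have hMne' : (M:ℝ) ≠ 0 := by positivity
    set e : ℕ → ℝ := fun n => (1 - r n ^ 2) ^ ((1:ℝ)/(M:ℝ)) with hedef
    have he0 : ∀ n, 0 < e n := fun n => Real.rpow_pos_of_pos (hε0 n) _
    have hεe : ∀ n, 1 - r n ^ 2 ≤ e n := fun n => by
      have h := Real.rpow_le_rpow_of_exponent_ge (hε0 n) (hε1 n)
        (show (1:ℝ)/(M:ℝ) ≤ 1 by rw [div_le_one (by positivity)]; linarith)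
      rw [Real.rpow_one] at h
      exact h
    have heM : ∀ n, e n ^ M = 1 - r n ^ 2 := fun n => by
      rw [hedef, ← Real.rpow_natCast ((1 - r n ^ 2) ^ ((1:ℝ)/(M:ℝ))) M,
        ← Real.rpow_mul (hε0 n).le, one_div_mul_cancel hMne', Real.rpow_one]
    have hδsq : ∀ n, δ n ^ 2 = e n := fun n => by
      rw [hδn n, hedef, ← Real.rpow_natCast ((1 - r n ^ 2) ^ ((1:ℝ)/(2*(M:ℝ)))) 2,
        ← Real.rpow_mul (hε0 n).le]
      congr 1
      push_cast
      field_simp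
    have hsubnum : ∀ n, 0 ≤ e n - (1 - r n)^2 := by
      intro n
      nlinarith [hεe n, hε1 n, hε0 n, (hr n).1, (hr n).2]
    set y : ℕ → ℝ := fun n =>
      if r n ≤ 1/2 then 1 else min (Real.sqrt (e n - (1 - r n)^2)) Real.pi with hydef
    have hclaim : ∀ (n : ℕ) (x : ℝ),
        dist ((x : AddCircle (2*Real.pi))) ((α : AddCircle (2*Real.pi))) ≤ y n →
        1 ≤ (1 - r n ^ 2) / ‖ζ - (r n : ℂ) * Complex.exp ((x:ℂ) * Complex.I)‖ ^ (2*M) := by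
      intro n x hx
      set d : ℝ := dist ((x : AddCircle (2*Real.pi))) ((α : AddCircle (2*Real.pi))) with hddef2
      have hd0 : 0 ≤ d := dist_nonneg
      rw [Hnorm n x, ← hddef2, one_le_div (pow_pos (Hfpos n d) M)]
      have hfe : 1 + r n ^ 2 - 2 * r n * Real.cos d ≤ e n := by
        by_cases hrn : r n ≤ 1/2
        · have hy1 : y n = 1 := if_pos hrn
          have hd1 : d ≤ 1 := by rw [hy1] at hx; exact hx
          have hcos : Real.cos 1 ≤ Real.cos d :=
            Real.cos_le_cos_of_nonneg_of_le_pi hd0 (by linarith) hd1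
          have h12 : (1:ℝ)/2 ≤ Real.cos 1 := by
            have := Real.one_sub_sq_div_two_le_cos (x := (1:ℝ))
            norm_num at this
            linarith
          nlinarith [(hr n).1, hεe n]
        · push_neg at hrn
          have hy1 : y n = min (Real.sqrt (e n - (1 - r n)^2)) Real.pi := if_neg (not_le.2 hrn)
          have hcos : 1 - d^2/2 ≤ Real.cos d := Real.one_sub_sq_div_two_le_cos
          have hdsq : d^2 ≤ e n - (1 - r n)^2 := by
            have h1 : d ≤ Real.sqrt (e n - (1 - r n)^2) := by
              rw [hy1] at hx
              exact hx.trans (min_le_left _ _)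
            have h2 := Real.sq_sqrt (hsubnum n)
            nlinarith [Real.sqrt_nonneg (e n - (1 - r n)^2)]
          nlinarith [(hr n).1, (hr n).2]
      calc (1 + r n ^ 2 - 2 * r n * Real.cos d) ^ M ≤ e n ^ M :=
            pow_le_pow_left₀ (Hfpos n d).le hfe M
        _ = 1 - r n ^ 2 := heM n
    -- events
    set T : ℕ → Set ℝ := fun n => {x : ℝ |
      1 ≤ (1 - r n ^ 2) / ‖ζ - (r n : ℂ) * Complex.exp ((x:ℂ) * Complex.I)‖ ^ (2*M)} with hTdef
    have hTmeas : ∀ n, MeasurableSet (T n) := fun n =>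
      (isClosed_le continuous_const (hFcont n)).measurableSet
    have hAmeas : ∀ n, MeasurableSet (θ n ⁻¹' T n) := fun n => (hmeas n) (hTmeas n)
    have hiset : iIndepSet (fun n => θ n ⁻¹' T n) μ := by
      rw [iIndepSet_iff_meas_biInter hAmeas]
      intro s
      exact hindep.meas_biInter (fun i _ => ⟨T i, hTmeas i, rfl⟩)
    have hy2 : ∀ n, δ n / 2 ≤ y n := by
      intro n
      by_cases hrn : r n ≤ 1/2
      · rw [hydef]
        simp only [if_pos hrn]
        linarith [hδ1 n]
      · push_neg at hrn
        rw [hydef]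
        simp only [if_neg (not_le.2 hrn)]
        refine le_min ?_ (by linarith [hδ1 n])
        rw [show δ n / 2 = δ n / 2 from rfl]
        have h1 : (δ n / 2)^2 ≤ e n - (1 - r n)^2 := by
          have h2 := hδsq n
          nlinarith [hεe n, hε1 n, hε0 n, (hr n).2, hδ0 n]
        have h3 : 0 ≤ δ n / 2 := by linarith [(hδ0 n).le]
        nlinarith [Real.sq_sqrt (hsubnum n), Real.sqrt_nonneg (e n - (1 - r n)^2)]
    have hlow : ∀ n, ENNReal.ofReal (δ n / (2*Real.pi)) ≤ μ (θ n ⁻¹' T n) := by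
      intro n
      have hsub2 : {ω | dist ((θ n ω : AddCircle (2*Real.pi)))
          ((α : AddCircle (2*Real.pi))) ≤ y n} ⊆ θ n ⁻¹' T n :=
        fun ω h => hclaim n (θ n ω) h
      calc ENNReal.ofReal (δ n / (2*Real.pi))
          ≤ (ENNReal.ofReal (2*Real.pi))⁻¹ * ENNReal.ofReal (min (2*Real.pi) (2*(y n))) := by
            rw [ENNReal.ofReal_div_of_pos (by positivity), ENNReal.div_eq_inv_mul]
            refine mul_le_mul_right (ENNReal.ofReal_le_ofReal (le_min ?_ ?_)) _
            · linarith [hδ1 n]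
            · linarith [hy2 n]
        _ = μ {ω | dist ((θ n ω : AddCircle (2*Real.pi)))
              ((α : AddCircle (2*Real.pi))) ≤ y n} := (Hmeasball n (y n)).symm
        _ ≤ μ (θ n ⁻¹' T n) := measure_mono hsub2
    have htop : ∑' n, μ (θ n ⁻¹' T n) = ∞ := by
      have h1 : ¬ Summable (fun n => δ n / (2*Real.pi)) := by
        intro h
        exact hnsumδ ((h.mul_right (2*Real.pi)).congr
          (fun n => div_mul_cancel₀ _ (by positivity)))
      have h2 := st14_ofReal_tsum_eq_top
        (fun n => div_nonneg (hδ0 n).le (by positivity)) h1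
      rw [← top_le_iff, ← h2]
      exact ENNReal.tsum_le_tsum hlow
    have hBC : μ (limsup (fun n => θ n ⁻¹' T n) atTop) = 1 :=
      measure_limsup_eq_one hAmeas hiset htop
    have hsub3 : {ω | Summable fun n =>
        (1 - r n ^ 2) / ‖ζ - (r n : ℂ) * Complex.exp ((θ n ω : ℂ) * Complex.I)‖ ^ (2 * M)}
        ⊆ (limsup (fun n => θ n ⁻¹' T n) atTop)ᶜ := by
      intro ω hω hmem
      rw [mem_limsup_iff_frequently_mem] at hmem
      simp only [mem_setOf_eq] at hω
      have h4 : ∀ᶠ n in atTop, (1 - r n ^ 2) /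
          ‖ζ - (r n : ℂ) * Complex.exp ((θ n ω : ℂ) * Complex.I)‖ ^ (2 * M) < 1 :=
        hω.tendsto_atTop_zero.eventually_lt_const one_pos
      obtain ⟨n, hn1, hn2⟩ := (hmem.and_eventually h4).exists
      exact absurd hn2 (not_lt.2 hn1)
    exact measure_mono_null hsub3
      ((prob_compl_eq_zero_iff (MeasurableSet.measurableSet_limsup hAmeas)).2 hBC)
end
end

section
/- Let M ≥ 1 be an integer, r ∈ (0,1), and let ϑ be a random variable uniformly distributed on [0,2π]. Then the probability that (1−r²)/|1−re^{iϑ}|^{2M} > 1 equals arccos(u_r)/π, where u_r = (1 + r² − (1−r²)^{1/M})/(2r); the number u_r always lies in [−1,1] for r ∈ (0,1). -/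
open Complex MeasureTheory Set
open scoped ENNReal

noncomputable section

/-- **Lemma (probability computation).** Let `M ≥ 1`, `r ∈ (0,1)` and `ϑ` uniform on `[0,2π]`.
Then `P( (1-r²)/|1-r e^{iϑ}|^{2M} > 1 ) = arccos(u_r)/π` where
`u_r = (1 + r² - (1-r²)^{1/M})/(2r)`; moreover `u_r ∈ [-1,1]`. -/
theorem statement15 (M : ℕ) (hM : 1 ≤ M) (r : ℝ) (hr0 : 0 < r) (hr1 : r < 1) :
    (-1 ≤ (1 + r ^ 2 - (1 - r ^ 2) ^ ((1 : ℝ) / M)) / (2 * r) ∧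
      (1 + r ^ 2 - (1 - r ^ 2) ^ ((1 : ℝ) / M)) / (2 * r) ≤ 1) ∧
    (volume {t : ℝ | t ∈ Set.Icc (0 : ℝ) (2 * Real.pi) ∧
        1 < (1 - r ^ 2) / ‖(1 : ℂ) - (r : ℂ) * Complex.exp ((t : ℂ) * Complex.I)‖ ^ (2 * M)}).toReal
      / (2 * Real.pi)
    = Real.arccos ((1 + r ^ 2 - (1 - r ^ 2) ^ ((1 : ℝ) / M)) / (2 * r)) / Real.pi := by
  have hM0 : (M:ℝ) ≠ 0 := by positivity
  have hr2 : 0 < 1 - r ^ 2 := by nlinarith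
  set v : ℝ := (1 - r ^ 2) ^ ((1 : ℝ) / M) with hvdef
  set u : ℝ := (1 + r ^ 2 - v) / (2 * r) with hudef
  have hv0 : 0 < v := Real.rpow_pos_of_pos hr2 _
  have hv1 : v ≤ 1 := Real.rpow_le_one hr2.le (by nlinarith) (by positivity)
  have hvge : 1 - r ^ 2 ≤ v := by
    have h1M : (1:ℝ)/M ≤ 1 := by
      rw [div_le_one (by positivity)]
      exact_mod_cast hM
    calc 1 - r ^ 2 = (1 - r^2) ^ (1:ℝ) := (Real.rpow_one _).symm
      _ ≤ v := Real.rpow_le_rpow_of_exponent_ge hr2 (by nlinarith) h1M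
  have hu1 : -1 ≤ u := by
    rw [hudef, le_div_iff₀ (by positivity)]
    nlinarith
  have hu2 : u ≤ 1 := by
    rw [hudef, div_le_one (by positivity)]
    nlinarith
  refine ⟨⟨hu1, hu2⟩, ?_⟩
  have hvM : v ^ M = 1 - r ^ 2 := by
    rw [hvdef, ← Real.rpow_natCast ((1-r^2) ^ ((1:ℝ)/M)) M, ← Real.rpow_mul hr2.le]
    rw [one_div_mul_cancel hM0, Real.rpow_one]
  set a : ℝ := Real.arccos u with hadef
  have ha0 : 0 ≤ a := Real.arccos_nonneg u
  have haπ : a ≤ Real.pi := Real.arccos_le_pi u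
  have hcosa : Real.cos a = u := Real.cos_arccos hu1 hu2
  have hπ : 0 < Real.pi := Real.pi_pos
  -- norm computation
  have hnorm : ∀ t : ℝ, ‖(1:ℂ) - (r:ℂ) * Complex.exp ((t:ℂ) * Complex.I)‖^2
      = 1 + r^2 - 2*r*Real.cos t := by
    intro t
    rw [Complex.sq_norm, Complex.normSq_apply]
    simp [Complex.exp_ofReal_mul_I_re, Complex.exp_ofReal_mul_I_im]
    nlinarith [Real.sin_sq_add_cos_sq t]
  -- condition equivalence
  have hcond : ∀ t : ℝ,
      (1 < (1 - r ^ 2) / ‖(1 : ℂ) - (r : ℂ) * Complex.exp ((t : ℂ) * Complex.I)‖ ^ (2 * M))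
      ↔ u < Real.cos t := by
    intro t
    have hw0 : 0 < 1 + r^2 - 2*r*Real.cos t := by
      nlinarith [Real.cos_le_one t]
    have h1 : ‖(1 : ℂ) - (r : ℂ) * Complex.exp ((t : ℂ) * Complex.I)‖ ^ (2 * M)
        = (1 + r^2 - 2*r*Real.cos t) ^ M := by
      rw [pow_mul, hnorm t]
    rw [h1, one_lt_div (by positivity)]
    rw [← hvM, pow_lt_pow_iff_left₀ hw0.le hv0.le (by omega)]
    rw [hudef, div_lt_iff₀ (by positivity)]
    constructor <;> intro h <;> nlinarith
  -- set equality
  have hset : {t : ℝ | t ∈ Set.Icc (0 : ℝ) (2 * Real.pi) ∧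
        1 < (1 - r ^ 2) / ‖(1 : ℂ) - (r : ℂ) * Complex.exp ((t : ℂ) * Complex.I)‖ ^ (2 * M)}
      = Set.Ico 0 a ∪ Set.Ioc (2*Real.pi - a) (2*Real.pi) := by
    ext t
    simp only [Set.mem_setOf_eq, Set.mem_Icc, Set.mem_union, Set.mem_Ico, Set.mem_Ioc, hcond t]
    constructor
    · rintro ⟨⟨ht0, ht2⟩, hc⟩
      by_cases htπ : t ≤ Real.pi
      · left
        refine ⟨ht0, ?_⟩
        by_contra h
        push_neg at h
        have := (Real.strictAntiOn_cos.le_iff_ge ⟨ht0, htπ⟩ ⟨ha0, haπ⟩).mpr h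
        rw [hcosa] at this
        linarith
      · right
        push_neg at htπ
        refine ⟨?_, ht2⟩
        set s := 2*Real.pi - t with hs
        have hs0 : 0 ≤ s := by simp [hs]; linarith
        have hsπ : s ≤ Real.pi := by simp [hs]; linarith
        have hcs : Real.cos s = Real.cos t := by simp [hs, Real.cos_sub]
        have hsa : s < a := by
          by_contra h
          push_neg at h
          have := (Real.strictAntiOn_cos.le_iff_ge ⟨hs0, hsπ⟩ ⟨ha0, haπ⟩).mpr h
          rw [hcosa, hcs] at this
          linarith
        linarith [hsa]
    · rintro (⟨ht0, hta⟩ | ⟨hta, ht2⟩)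
      · have htπ : t ≤ Real.pi := by linarith
        have := Real.strictAntiOn_cos ⟨ht0, htπ⟩ ⟨ha0, haπ⟩ hta
        rw [hcosa] at this
        exact ⟨⟨ht0, by linarith⟩, this⟩
      · set s := 2*Real.pi - t with hs
        have hs0 : 0 ≤ s := by simp [hs]; linarith
        have hsa : s < a := by simp [hs]; linarith
        have hcs : Real.cos s = Real.cos t := by simp [hs, Real.cos_sub]
        have := Real.strictAntiOn_cos ⟨hs0, by linarith⟩ ⟨ha0, haπ⟩ hsa
        rw [hcosa, hcs] at this
        exact ⟨⟨by linarith, ht2⟩, this⟩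
  rw [hset]
  have hdisj : Disjoint (Set.Ico (0:ℝ) a) (Set.Ioc (2*Real.pi - a) (2*Real.pi)) := by
    rw [Set.disjoint_left]
    rintro x ⟨hx0, hxa⟩ ⟨hx1, hx2⟩
    linarith
  rw [measure_union hdisj measurableSet_Ioc, Real.volume_Ico, Real.volume_Ioc]
  have : 2*Real.pi - (2*Real.pi - a) = a := by ring
  rw [this, sub_zero, ← ENNReal.ofReal_add ha0 ha0, ENNReal.toReal_ofReal (by linarith)]
  field_simp
  ring
end
end

section
/- Let M ≥ 1 be an integer. There exist constants c, C > 0 and r₀ ∈ (0,1), depending only on M, such that for every r ∈ (r₀,1): c·(1−r²)^{1/(2M)} ≤ (1/2π)·∫_{E_r} (1−r²)/|1−re^{it}|^{2M} dt ≤ C·(1−r²)^{1/(2M)}, where E_r = { t ∈ [0,2π] : (1−r²)/|1−re^{it}|^{2M} ≤ 1 }. -/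
open Complex MeasureTheory Set
open scoped ENNReal

noncomputable section

lemma Nsq (r t : ℝ) :
    ‖(1 : ℂ) - (r : ℂ) * Complex.exp ((t : ℂ) * Complex.I)‖ ^ 2
      = 1 - 2 * r * Real.cos t + r ^ 2 := by
  rw [Complex.sq_norm, Complex.normSq_apply]
  simp [Complex.sub_re, Complex.sub_im, Complex.mul_re, Complex.mul_im,
    Complex.exp_ofReal_mul_I_re, Complex.exp_ofReal_mul_I_im]
  nlinarith [Real.sin_sq_add_cos_sq t]

lemma Npos (r t : ℝ) (hr : r < 1) (hr0 : 0 ≤ r) :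
    0 < ‖(1 : ℂ) - (r : ℂ) * Complex.exp ((t : ℂ) * Complex.I)‖ := by
  have h1 : ‖(1:ℂ)‖ - ‖(r : ℂ) * Complex.exp ((t : ℂ) * Complex.I)‖
      ≤ ‖(1 : ℂ) - (r : ℂ) * Complex.exp ((t : ℂ) * Complex.I)‖ := norm_sub_norm_le _ _
  rw [norm_one, norm_mul, Complex.norm_exp_ofReal_mul_I, Complex.norm_real] at h1
  simp only [Real.norm_eq_abs, _root_.abs_of_nonneg hr0, mul_one] at h1
  linarith

lemma Nlow (r t : ℝ) (hr : 1/2 ≤ r) (hr1 : r ≤ 1) (ht0 : 0 ≤ t) (htpi : t ≤ Real.pi) :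
    t / 3 ≤ ‖(1 : ℂ) - (r : ℂ) * Complex.exp ((t : ℂ) * Complex.I)‖ := by
  set N := ‖(1 : ℂ) - (r : ℂ) * Complex.exp ((t : ℂ) * Complex.I)‖ with hN
  have hsq := Nsq r t
  have hcos : Real.cos t ≤ 1 - 2 / Real.pi ^ 2 * t ^ 2 :=
    Real.cos_le_one_sub_mul_cos_sq (by rwa [_root_.abs_of_nonneg ht0])
  have hpi : Real.pi ≤ 4 := Real.pi_le_four
  have hpi0 : 0 < Real.pi := Real.pi_pos
  have h2 : 2 / Real.pi ^ 2 * t ^ 2 ≥ t ^ 2 / 8 := by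
    have hp2 : (0:ℝ) < Real.pi ^ 2 := by positivity
    have h16 : Real.pi ^ 2 ≤ 16 := by nlinarith
    rw [ge_iff_le, div_mul_eq_mul_div, div_le_div_iff₀ (by norm_num) hp2]
    nlinarith [sq_nonneg t, mul_le_mul_of_nonneg_left h16 (sq_nonneg t)]
  have hN0 : 0 ≤ N := norm_nonneg _
  have hkey : t ^ 2 / 9 ≤ N ^ 2 := by nlinarith
  nlinarith

lemma Nup (r t : ℝ) (hr0 : 0 ≤ r) (hr1 : r ≤ 1) (ht0 : 0 ≤ t) :
    ‖(1 : ℂ) - (r : ℂ) * Complex.exp ((t : ℂ) * Complex.I)‖ ≤ (1 - r) + t := by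
  set N := ‖(1 : ℂ) - (r : ℂ) * Complex.exp ((t : ℂ) * Complex.I)‖ with hN
  have hsq := Nsq r t
  have hcos : 1 - t ^ 2 / 2 ≤ Real.cos t := Real.one_sub_sq_div_two_le_cos
  have hN0 : 0 ≤ N := norm_nonneg _
  nlinarith

lemma Nsymm (r t : ℝ) :
    ‖(1 : ℂ) - (r : ℂ) * Complex.exp (((2 * Real.pi - t : ℝ) : ℂ) * Complex.I)‖
      = ‖(1 : ℂ) - (r : ℂ) * Complex.exp ((t : ℂ) * Complex.I)‖ := by
  have h1 := Nsq r (2 * Real.pi - t)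
  have h2 := Nsq r t
  rw [Real.cos_two_pi_sub] at h1
  have := h1.trans h2.symm
  calc ‖(1 : ℂ) - (r : ℂ) * Complex.exp (((2 * Real.pi - t : ℝ) : ℂ) * Complex.I)‖
      = Real.sqrt (‖(1 : ℂ) - (r : ℂ) * Complex.exp (((2 * Real.pi - t : ℝ) : ℂ) * Complex.I)‖ ^ 2) :=
        (Real.sqrt_sq (norm_nonneg _)).symm
    _ = Real.sqrt (‖(1 : ℂ) - (r : ℂ) * Complex.exp ((t : ℂ) * Complex.I)‖ ^ 2) := by rw [this]
    _ = _ := Real.sqrt_sq (norm_nonneg _)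

def Fc (M : ℕ) (r t : ℝ) : ℝ :=
  (1 - r ^ 2) / ‖(1 : ℂ) - (r : ℂ) * Complex.exp ((t : ℂ) * Complex.I)‖ ^ (2 * M)

def Ec (M : ℕ) (r : ℝ) : Set ℝ :=
  {t : ℝ | t ∈ Set.Icc (0 : ℝ) (2 * Real.pi) ∧ Fc M r t ≤ 1}

lemma Fc_cont (M : ℕ) (r : ℝ) (hr0 : 0 ≤ r) (hr1 : r < 1) : Continuous (Fc M r) := by
  apply continuous_const.div
  · exact ((continuous_const.sub (continuous_const.mul
      (Complex.continuous_exp.comp (Complex.continuous_ofReal.mul continuous_const)))).norm).pow _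
  · exact fun t => pow_ne_zero _ (Npos r t hr1 hr0).ne'

lemma Fc_nonneg (M : ℕ) (r t : ℝ) (hr1 : r ≤ 1) (hr0 : -1 ≤ r) : 0 ≤ Fc M r t :=
  div_nonneg (by nlinarith) (pow_nonneg (norm_nonneg _) _)

lemma delta_pow (M : ℕ) (hM : 1 ≤ M) (r : ℝ) (h1r2 : 0 < 1 - r ^ 2) :
    ((1 - r ^ 2) ^ ((1 : ℝ) / (2 * M))) ^ (2 * M) = 1 - r ^ 2 := by
  rw [← Real.rpow_natCast ((1 - r ^ 2) ^ ((1 : ℝ) / (2 * M))) (2 * M),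
    ← Real.rpow_mul h1r2.le]
  have hM0 : (M : ℝ) ≠ 0 := Nat.cast_ne_zero.2 (by omega)
  have h1 : (1 : ℝ) / (2 * M) * ((2 * M : ℕ) : ℝ) = 1 := by
    push_cast
    field_simp
  rw [h1, Real.rpow_one]

lemma lower (M : ℕ) (hM : 1 ≤ M) (r : ℝ) (hr2 : 1 / 2 < r) (hr1 : r < 1)
    (hsmall : 1 - r ^ 2 < (1 / 10 : ℝ) ^ (2 * M)) :
    (1 / (2 * 9 ^ (2 * M))) * (1 - r ^ 2) ^ ((1 : ℝ) / (2 * M)) ≤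
      (1 / (2 * Real.pi)) * ∫ t in Ec M r, Fc M r t := by
  have hr0 : (0 : ℝ) ≤ r := by linarith
  have h1r2 : 0 < 1 - r ^ 2 := by nlinarith
  set δ := (1 - r ^ 2) ^ ((1 : ℝ) / (2 * M)) with hδ
  have hδ0 : 0 < δ := Real.rpow_pos_of_pos h1r2 _
  have hδpow : δ ^ (2 * M) = 1 - r ^ 2 := delta_pow M hM r h1r2
  have hδ10 : δ < 1 / 10 := by
    refine lt_of_pow_lt_pow_left₀ (2 * M) (by norm_num) ?_
    rw [hδpow]; exact hsmall
  have hπ4 : Real.pi ≤ 4 := Real.pi_le_four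
  have hπ3 : 3 < Real.pi := Real.pi_gt_three
  have hsub : Set.Icc (4 * δ) (8 * δ) ⊆ Ec M r := by
    intro t ht
    obtain ⟨ht1, ht2⟩ := ht
    have ht0 : 0 ≤ t := le_trans (by positivity) ht1
    have htpi : t ≤ Real.pi := by nlinarith
    refine ⟨⟨ht0, by nlinarith⟩, ?_⟩
    have hNl := Nlow r t hr2.le hr1.le ht0 htpi
    have hNδ : δ ≤ ‖(1 : ℂ) - (r : ℂ) * Complex.exp ((t : ℂ) * Complex.I)‖ := by linarith
    rw [Fc, div_le_one (pow_pos (Npos r t hr1 hr0) _)]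
    calc 1 - r ^ 2 = δ ^ (2 * M) := hδpow.symm
      _ ≤ _ := pow_le_pow_left₀ hδ0.le hNδ _
  have hpt : ∀ t ∈ Set.Icc (4 * δ) (8 * δ), 1 / (9 : ℝ) ^ (2 * M) ≤ Fc M r t := by
    intro t ht
    obtain ⟨ht1, ht2⟩ := ht
    have ht0 : 0 ≤ t := le_trans (by positivity) ht1
    have hNu := Nup r t hr0 hr1.le ht0
    have h1rδ : 1 - r ≤ δ := by
      have e1 : 1 - r ≤ 1 - r ^ 2 := by nlinarith
      have e2 : δ ^ (2 * M) ≤ δ := pow_le_of_le_one hδ0.le (by linarith) (by omega)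
      linarith [hδpow ▸ e2]
    have hN9 : ‖(1 : ℂ) - (r : ℂ) * Complex.exp ((t : ℂ) * Complex.I)‖ ≤ 9 * δ := by linarith
    rw [Fc, le_div_iff₀ (pow_pos (Npos r t hr1 hr0) _)]
    calc 1 / (9 : ℝ) ^ (2 * M) * ‖(1 : ℂ) - (r : ℂ) * Complex.exp ((t : ℂ) * Complex.I)‖ ^ (2 * M)
        ≤ 1 / (9 : ℝ) ^ (2 * M) * (9 * δ) ^ (2 * M) := by
          have := pow_le_pow_left₀ (norm_nonneg _) hN9 (2 * M)
          have h9 : (0 : ℝ) < 9 ^ (2 * M) := by positivity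
          exact mul_le_mul_of_nonneg_left this (by positivity)
      _ = 1 - r ^ 2 := by rw [mul_pow, ← hδpow]; field_simp
  have hFc : Continuous (Fc M r) := Fc_cont M r hr0 hr1
  have hInt : IntegrableOn (Fc M r) (Ec M r) :=
    (hFc.integrableOn_Icc (a := 0) (b := 2 * Real.pi)).mono_set (fun t ht => ht.1)
  have h1 : ∫ t in Set.Icc (4 * δ) (8 * δ), Fc M r t ≤ ∫ t in Ec M r, Fc M r t :=
    setIntegral_mono_set hInt
      (Filter.Eventually.of_forall fun t => Fc_nonneg M r t hr1.le (by linarith))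
      (HasSubset.Subset.eventuallyLE hsub)
  have h2 : (volume (Set.Icc (4 * δ) (8 * δ))).toReal • (1 / (9 : ℝ) ^ (2 * M)) ≤
      ∫ t in Set.Icc (4 * δ) (8 * δ), Fc M r t := by
    change (volume.real (Set.Icc (4 * δ) (8 * δ))) • (1 / (9 : ℝ) ^ (2 * M)) ≤ _
    rw [← setIntegral_const]
    exact setIntegral_mono_on (integrableOn_const measure_Icc_lt_top.ne)
      hFc.integrableOn_Icc measurableSet_Icc hpt
  rw [Real.volume_Icc, ENNReal.toReal_ofReal (by linarith), smul_eq_mul] at h2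
  have h9 : (0 : ℝ) < 9 ^ (2 * M) := by positivity
  have hI : 4 * δ / 9 ^ (2 * M) ≤ ∫ t in Ec M r, Fc M r t := by
    have : (8 * δ - 4 * δ) * (1 / (9 : ℝ) ^ (2 * M)) = 4 * δ / 9 ^ (2 * M) := by ring
    linarith
  calc (1 / (2 * 9 ^ (2 * M))) * δ ≤ (1 / (2 * Real.pi)) * (4 * δ / 9 ^ (2 * M)) := by
        rw [div_mul_eq_mul_div, one_mul, div_mul_eq_mul_div, one_mul,
          div_le_div_iff₀ (by positivity) (by positivity)]
        rw [div_mul_eq_mul_div, le_div_iff₀ h9]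
        nlinarith [mul_pos hδ0 h9]
    _ ≤ (1 / (2 * Real.pi)) * ∫ t in Ec M r, Fc M r t :=
        mul_le_mul_of_nonneg_left hI (by positivity)

lemma upper (M : ℕ) (hM : 1 ≤ M) (r : ℝ) (hr2 : 1 / 2 < r) (hr1 : r < 1)
    (hsmall : 1 - r ^ 2 < (1 / 10 : ℝ) ^ (2 * M)) :
    (1 / (2 * Real.pi)) * ∫ t in Ec M r, Fc M r t ≤
      2 * (1 - r ^ 2) ^ ((1 : ℝ) / (2 * M)) := by
  have hr0 : (0 : ℝ) ≤ r := by linarith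
  have h1r2 : 0 < 1 - r ^ 2 := by nlinarith
  set δ := (1 - r ^ 2) ^ ((1 : ℝ) / (2 * M)) with hδ
  have hδ0 : 0 < δ := Real.rpow_pos_of_pos h1r2 _
  have hδpow : δ ^ (2 * M) = 1 - r ^ 2 := delta_pow M hM r h1r2
  have hδ10 : δ < 1 / 10 := by
    refine lt_of_pow_lt_pow_left₀ (2 * M) (by norm_num) ?_
    rw [hδpow]; exact hsmall
  have hπ4 : Real.pi ≤ 4 := Real.pi_le_four
  have hπ3 : 3 < Real.pi := Real.pi_gt_three
  have hFc : Continuous (Fc M r) := Fc_cont M r hr0 hr1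
  set g : ℝ → ℝ := fun t => min (Fc M r t) 1 with hgdef
  have hgc : Continuous g := hFc.min continuous_const
  have hg0 : ∀ t, 0 ≤ g t := fun t =>
    le_min (Fc_nonneg M r t hr1.le (by linarith)) zero_le_one
  have hg1 : ∀ t, g t ≤ 1 := fun t => min_le_right _ _
  have hEmeas : MeasurableSet (Ec M r) :=
    measurableSet_Icc.inter (measurableSet_le hFc.measurable measurable_const)
  have hii : ∀ a b : ℝ, IntervalIntegrable g volume a b :=
    fun a b => hgc.intervalIntegrable a b
  -- pointwise bound on [3δ, π]
  have hmid : ∀ t ∈ Set.Icc (3 * δ) Real.pi, g t ≤ 9 * δ ^ 2 / t ^ 2 := by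
    intro t ht
    obtain ⟨ht1, ht2⟩ := ht
    have ht0 : 0 < t := lt_of_lt_of_le (by positivity) ht1
    have h3 : δ ≤ t / 3 := by linarith
    have hNge := Nlow r t hr2.le hr1.le ht0.le ht2
    have hNpos := Npos r t hr1 hr0
    have e : 2 * M = 2 + (2 * M - 2) := by omega
    have hNpow : (t / 3) ^ 2 * δ ^ (2 * M - 2) ≤
        ‖(1 : ℂ) - (r : ℂ) * Complex.exp ((t : ℂ) * Complex.I)‖ ^ (2 * M) := by
      calc (t / 3) ^ 2 * δ ^ (2 * M - 2)
          ≤ (t / 3) ^ 2 * (t / 3) ^ (2 * M - 2) :=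
            mul_le_mul_of_nonneg_left (pow_le_pow_left₀ hδ0.le h3 _) (by positivity)
        _ = (t / 3) ^ (2 * M) := by rw [← pow_add, ← e]
        _ ≤ _ := pow_le_pow_left₀ (by positivity) hNge _
    have hδsplit : δ ^ (2 * M) = δ ^ 2 * δ ^ (2 * M - 2) := by rw [← pow_add, ← e]
    refine le_trans (min_le_left _ _) ?_
    rw [Fc, ← hδpow, div_le_div_iff₀ (pow_pos hNpos _) (by positivity)]
    calc δ ^ (2 * M) * t ^ 2 = 9 * δ ^ 2 * ((t / 3) ^ 2 * δ ^ (2 * M - 2)) := by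
          rw [hδsplit]; ring
      _ ≤ _ := mul_le_mul_of_nonneg_left hNpow (by positivity)
  -- integral of the comparison function
  have hcmp_int : IntervalIntegrable (fun t => 9 * δ ^ 2 / t ^ 2) volume (3 * δ) Real.pi := by
    apply ContinuousOn.intervalIntegrable
    apply ContinuousOn.div continuousOn_const (continuousOn_pow 2)
    intro t ht
    rw [Set.uIcc_of_le (by linarith)] at ht
    have : 0 < t := lt_of_lt_of_le (by positivity) ht.1
    positivity
  have hcmp_val : ∫ t in (3 * δ)..Real.pi, 9 * δ ^ 2 / t ^ 2 =
      9 * δ ^ 2 * (1 / (3 * δ) - 1 / Real.pi) := by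
    have hfe : (fun t : ℝ => 9 * δ ^ 2 / t ^ 2) = fun t : ℝ => 9 * δ ^ 2 * t ^ (-2 : ℤ) := by
      funext t
      rw [show (-2 : ℤ) = -((2 : ℕ) : ℤ) by norm_num, zpow_neg, zpow_natCast,
        div_eq_mul_inv]
    rw [hfe, intervalIntegral.integral_const_mul, integral_zpow]
    · norm_num
      exact Or.inl (by ring)
    · refine Or.inr ⟨by norm_num, ?_⟩
      rw [Set.uIcc_of_le (by linarith)]
      intro h
      exact absurd h.1 (by push_neg; positivity)
  have hB : ∫ t in (3 * δ)..Real.pi, g t ≤ 3 * δ := by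
    have := intervalIntegral.integral_mono_on (by linarith) (hii _ _) hcmp_int hmid
    rw [hcmp_val] at this
    have h9 : 9 * δ ^ 2 * (1 / (3 * δ) - 1 / Real.pi) ≤ 3 * δ := by
      have : 9 * δ ^ 2 * (1 / (3 * δ)) = 3 * δ := by field_simp; ring
      nlinarith [mul_pos (mul_pos (by norm_num : (0:ℝ) < 9) (pow_pos hδ0 2)) (by positivity : (0:ℝ) < 1 / Real.pi)]
    linarith
  -- symmetry for [π, 2π - 3δ]
  have hg_symm : ∀ u : ℝ, g (2 * Real.pi - u) = g u := by
    intro u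
    simp only [hgdef, Fc, Nsymm]
  have hC : ∫ t in Real.pi..(2 * Real.pi - 3 * δ), g t ≤ 3 * δ := by
    have h1 : ∫ t in Real.pi..(2 * Real.pi - 3 * δ), g t
        = ∫ t in Real.pi..(2 * Real.pi - 3 * δ), g (2 * Real.pi - t) := by
      refine intervalIntegral.integral_congr fun t _ => ?_
      rw [hg_symm]
    have h2 := intervalIntegral.integral_comp_sub_left
      (a := Real.pi) (b := 2 * Real.pi - 3 * δ) g (2 * Real.pi)
    rw [h1, h2, show 2 * Real.pi - (2 * Real.pi - 3 * δ) = 3 * δ by ring,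
      show 2 * Real.pi - Real.pi = Real.pi by ring]
    exact hB
  have hA : ∫ t in (0 : ℝ)..(3 * δ), g t ≤ 3 * δ := by
    have := intervalIntegral.integral_mono_on (a := (0:ℝ)) (b := 3*δ)
      (f := g) (g := fun _ => (1:ℝ)) (by positivity) (hii _ _)
      intervalIntegrable_const (fun t _ => hg1 t)
    simp only [intervalIntegral.integral_const, smul_eq_mul, mul_one, sub_zero] at this
    linarith
  have hD : ∫ t in (2 * Real.pi - 3 * δ)..(2 * Real.pi), g t ≤ 3 * δ := by
    have := intervalIntegral.integral_mono_on (a := 2*Real.pi - 3*δ) (b := 2*Real.pi)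
      (f := g) (g := fun _ => (1:ℝ)) (by linarith) (hii _ _)
      intervalIntegrable_const (fun t _ => hg1 t)
    simp only [intervalIntegral.integral_const, smul_eq_mul, mul_one] at this
    linarith
  -- splitting
  have e1 : (∫ t in (0:ℝ)..(3*δ), g t) + ∫ t in (3*δ)..Real.pi, g t
      = ∫ t in (0:ℝ)..Real.pi, g t :=
    intervalIntegral.integral_add_adjacent_intervals (hii _ _) (hii _ _)
  have e2 : (∫ t in (0:ℝ)..Real.pi, g t) + ∫ t in Real.pi..(2*Real.pi - 3*δ), g t
      = ∫ t in (0:ℝ)..(2*Real.pi - 3*δ), g t :=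
    intervalIntegral.integral_add_adjacent_intervals (hii _ _) (hii _ _)
  have e3 : (∫ t in (0:ℝ)..(2*Real.pi - 3*δ), g t) + ∫ t in (2*Real.pi - 3*δ)..(2*Real.pi), g t
      = ∫ t in (0:ℝ)..(2*Real.pi), g t :=
    intervalIntegral.integral_add_adjacent_intervals (hii _ _) (hii _ _)
  have htot : ∫ t in (0:ℝ)..(2*Real.pi), g t ≤ 12 * δ := by linarith
  -- from set integral to interval integral
  have hstep1 : ∫ t in Ec M r, Fc M r t = ∫ t in Ec M r, g t :=
    setIntegral_congr_fun hEmeas fun t ht => (min_eq_left ht.2).symm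
  have hstep2 : ∫ t in Ec M r, g t ≤ ∫ t in Set.Icc (0:ℝ) (2*Real.pi), g t :=
    setIntegral_mono_set hgc.integrableOn_Icc
      (Filter.Eventually.of_forall hg0)
      (HasSubset.Subset.eventuallyLE fun t ht => ht.1)
  have hstep3 : ∫ t in Set.Icc (0:ℝ) (2*Real.pi), g t = ∫ t in (0:ℝ)..(2*Real.pi), g t := by
    rw [intervalIntegral.integral_of_le (by positivity), integral_Icc_eq_integral_Ioc]
  have hfin : ∫ t in Ec M r, Fc M r t ≤ 12 * δ := by
    rw [hstep1]
    calc ∫ t in Ec M r, g t ≤ ∫ t in Set.Icc (0:ℝ) (2*Real.pi), g t := hstep2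
      _ = ∫ t in (0:ℝ)..(2*Real.pi), g t := hstep3
      _ ≤ 12 * δ := htot
  have h2π : (0:ℝ) < 2 * Real.pi := by positivity
  rw [div_mul_eq_mul_div, one_mul, div_le_iff₀ h2π]
  nlinarith

/-- **Lemma (two-sided estimate of the truncated expectation).** Let `M ≥ 1`.  There are
`c, C > 0` and `r₀ ∈ (0,1)`, depending only on `M`, such that for every `r ∈ (r₀, 1)`:
`c (1-r²)^{1/(2M)} ≤ (1/2π) ∫_{E_r} (1-r²)/|1-re^{it}|^{2M} dt ≤ C (1-r²)^{1/(2M)}`, where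
`E_r = { t ∈ [0,2π] : (1-r²)/|1-re^{it}|^{2M} ≤ 1 }`. -/
theorem statement17 (M : ℕ) (hM : 1 ≤ M) :
    ∃ c C r₀ : ℝ, 0 < c ∧ 0 < C ∧ 0 < r₀ ∧ r₀ < 1 ∧
      ∀ r : ℝ, r₀ < r → r < 1 →
        c * (1 - r ^ 2) ^ ((1 : ℝ) / (2 * M)) ≤
          (1 / (2 * Real.pi)) *
            ∫ t in {t : ℝ | t ∈ Set.Icc (0 : ℝ) (2 * Real.pi) ∧
                (1 - r ^ 2) / ‖(1 : ℂ) - (r : ℂ) * Complex.exp ((t : ℂ) * Complex.I)‖ ^ (2 * M) ≤ 1},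
              (1 - r ^ 2) / ‖(1 : ℂ) - (r : ℂ) * Complex.exp ((t : ℂ) * Complex.I)‖ ^ (2 * M) ∧
        (1 / (2 * Real.pi)) *
            ∫ t in {t : ℝ | t ∈ Set.Icc (0 : ℝ) (2 * Real.pi) ∧
                (1 - r ^ 2) / ‖(1 : ℂ) - (r : ℂ) * Complex.exp ((t : ℂ) * Complex.I)‖ ^ (2 * M) ≤ 1},
              (1 - r ^ 2) / ‖(1 : ℂ) - (r : ℂ) * Complex.exp ((t : ℂ) * Complex.I)‖ ^ (2 * M) ≤
          C * (1 - r ^ 2) ^ ((1 : ℝ) / (2 * M)) := by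
  have hε : (0 : ℝ) < (1 / 10 : ℝ) ^ (2 * M) := by positivity
  refine ⟨1 / (2 * 9 ^ (2 * M)), 2, max (1 / 2) (1 - (1 / 10 : ℝ) ^ (2 * M) / 2),
    by positivity, by norm_num,
    lt_of_lt_of_le (by norm_num) (le_max_left _ _),
    max_lt (by norm_num) (by linarith), ?_⟩
  intro r hr hr1
  have hr2 : (1 : ℝ) / 2 < r := lt_of_le_of_lt (le_max_left _ _) hr
  have hrr : 1 - (1 / 10 : ℝ) ^ (2 * M) / 2 < r := lt_of_le_of_lt (le_max_right _ _) hr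
  have hsmall : 1 - r ^ 2 < (1 / 10 : ℝ) ^ (2 * M) := by nlinarith
  exact ⟨lower M hM r hr2 hr1 hsmall, upper M hM r hr2 hr1 hsmall⟩
end
end
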